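/- arXiv:1901.10989 — 7 statements merged into one kernel-verified Lean document; each statement's English description precedes it below -/
import Mathlib

section
/- Let γ¹, γ², λ > 0, β > 0, a > 0, s ∈ ℝ, T > 0, and set δ = sqrt((γ¹ + γ²) a² / (2λ)). Define F₀(t) = −δ tanh(δ(T − t)), E₀(t) = (β/a) F₀(t), and D₀(t) = −(γ² s/(γ¹ + γ²)) F₀(t) on [0, T]. Then F₀′(t) = ((γ¹ + γ²)/(2λ)) a² − F₀(t)² with F₀(T) = 0, E₀′(t) = ((γ¹ + γ²)/(2λ)) β a − E₀(t) F₀(t) with E₀(T) = 0, and D₀′(t) = −(γ² s/(2λ)) a² − F₀(t) D₀(t) with D₀(T) = 0. In particular, when γ¹ = γ², the functions (B, C, E, F) = (0, 0, E₀, F₀) solve the coupled Riccati system. -/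
open Set

/-- The coupled Riccati system: `(B, C, E, F)` is a continuously differentiable solution on
`[0, T]` of
`B′(t) = ((γ¹ − γ²)/2) β (a + B(t)) − C(t)E(t)`,
`C′(t) = ((γ¹ − γ²)/2)(a + B(t))² − C(t)F(t)`,
`E′(t) = ((γ¹ + γ²)/(2λ)) β (a + B(t)) − E(t)F(t)`,
`F′(t) = ((γ¹ + γ²)/(2λ))(a + B(t))² − F(t)²`,
with terminal conditions `B(T) = C(T) = E(T) = F(T) = 0`. -/
def RiccatiSystem (γ1 γ2 lam β a T : ℝ) (B C E F : ℝ → ℝ) : Prop :=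
  ContDiffOn ℝ 1 B (Icc 0 T) ∧ ContDiffOn ℝ 1 C (Icc 0 T) ∧
  ContDiffOn ℝ 1 E (Icc 0 T) ∧ ContDiffOn ℝ 1 F (Icc 0 T) ∧
  (∀ t ∈ Icc (0:ℝ) T,
      HasDerivWithinAt B ((γ1 - γ2) / 2 * β * (a + B t) - C t * E t) (Icc 0 T) t ∧
      HasDerivWithinAt C ((γ1 - γ2) / 2 * (a + B t) ^ 2 - C t * F t) (Icc 0 T) t ∧
      HasDerivWithinAt E ((γ1 + γ2) / (2 * lam) * β * (a + B t) - E t * F t) (Icc 0 T) t ∧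
      HasDerivWithinAt F ((γ1 + γ2) / (2 * lam) * (a + B t) ^ 2 - F t ^ 2) (Icc 0 T) t) ∧
  B T = 0 ∧ C T = 0 ∧ E T = 0 ∧ F T = 0

lemma tanh_hasDerivAt (x : ℝ) : HasDerivAt Real.tanh (1 - Real.tanh x ^ 2) x := by
  have hc : Real.cosh x ≠ 0 := (Real.cosh_pos x).ne'
  have h := (Real.hasDerivAt_sinh x).div (Real.hasDerivAt_cosh x) hc
  have hfun : (fun y => Real.sinh y / Real.cosh y) = Real.tanh := by
    funext y; rw [Real.tanh_eq_sinh_div_cosh]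
  have hval : (Real.cosh x * Real.cosh x - Real.sinh x * Real.sinh x) / Real.cosh x ^ 2
      = 1 - Real.tanh x ^ 2 := by
    rw [Real.tanh_eq_sinh_div_cosh]
    have h1 : Real.cosh x ^ 2 - Real.sinh x ^ 2 = 1 := Real.cosh_sq_sub_sinh_sq x
    field_simp
  rw [show Real.sinh / Real.cosh = Real.tanh from hfun, hval] at h
  exact h

lemma contDiff_tanh : ContDiff ℝ 1 Real.tanh := by
  have : Real.tanh = fun x => Real.sinh x / Real.cosh x := by
    funext y; rw [Real.tanh_eq_sinh_div_cosh]
  rw [this]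
  exact Real.contDiff_sinh.div Real.contDiff_cosh fun x => (Real.cosh_pos x).ne'

/-- The explicit limiting functions `F₀(t) = −δ tanh(δ(T − t))`, `E₀(t) = (β/a) F₀(t)`,
`D₀(t) = −(γ² s/(γ¹ + γ²)) F₀(t)` solve their respective ODEs, and for `γ¹ = γ²` the tuple
`(0, 0, E₀, F₀)` solves the coupled Riccati system. -/
theorem limiting_riccati_solutions
    (γ1 γ2 lam β a s T : ℝ)
    (hγ1 : 0 < γ1) (hγ2 : 0 < γ2) (hlam : 0 < lam) (hβ : 0 < β) (ha : 0 < a) (hT : 0 < T)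
    (δ : ℝ) (hδ : δ = Real.sqrt ((γ1 + γ2) * a ^ 2 / (2 * lam)))
    (F0 E0 D0 : ℝ → ℝ)
    (hF0 : F0 = fun t => -δ * Real.tanh (δ * (T - t)))
    (hE0 : E0 = fun t => β / a * F0 t)
    (hD0 : D0 = fun t => -(γ2 * s / (γ1 + γ2)) * F0 t) :
    (∀ t ∈ Icc (0:ℝ) T,
      HasDerivWithinAt F0 ((γ1 + γ2) / (2 * lam) * a ^ 2 - F0 t ^ 2) (Icc 0 T) t ∧
      HasDerivWithinAt E0 ((γ1 + γ2) / (2 * lam) * β * a - E0 t * F0 t) (Icc 0 T) t ∧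
      HasDerivWithinAt D0 (-(γ2 * s / (2 * lam)) * a ^ 2 - F0 t * D0 t) (Icc 0 T) t) ∧
    F0 T = 0 ∧ E0 T = 0 ∧ D0 T = 0 ∧
    (γ1 = γ2 → RiccatiSystem γ1 γ2 lam β a T (fun _ => 0) (fun _ => 0) E0 F0) := by
  have hδ2 : δ ^ 2 = (γ1 + γ2) * a ^ 2 / (2 * lam) := by
    rw [hδ, sq]
    exact Real.mul_self_sqrt (by positivity)
  -- derivative of F0
  have hFderiv : ∀ t : ℝ, HasDerivAt F0 (δ ^ 2 - F0 t ^ 2) t := by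
    intro t
    have hinner : HasDerivAt (fun t : ℝ => δ * (T - t)) (-δ) t := by
      have : HasDerivAt (fun t : ℝ => T - t) (-1) t := by
        simpa using (hasDerivAt_id' t).const_sub T
      simpa using this.const_mul δ
    have h := ((tanh_hasDerivAt (δ * (T - t))).comp t hinner).const_mul (-δ)
    have : F0 = fun t => -δ * Real.tanh (δ * (T - t)) := hF0
    rw [hF0]
    refine h.congr_deriv ?_
    ring
  have haF0 : ∀ t, β / a * (δ ^ 2 - F0 t ^ 2)
      = (γ1 + γ2) / (2 * lam) * β * a - (β / a * F0 t) * F0 t := by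
    intro t
    rw [hδ2]
    field_simp
  have hE0deriv : ∀ t : ℝ,
      HasDerivAt E0 ((γ1 + γ2) / (2 * lam) * β * a - E0 t * F0 t) t := by
    intro t
    have h := (hFderiv t).const_mul (β / a)
    rw [hE0]
    simpa [haF0 t] using h
  have hD0deriv : ∀ t : ℝ,
      HasDerivAt D0 (-(γ2 * s / (2 * lam)) * a ^ 2 - F0 t * D0 t) t := by
    intro t
    have h := (hFderiv t).const_mul (-(γ2 * s / (γ1 + γ2)))
    rw [hD0]
    refine h.congr_deriv ?_
    have hg : γ1 + γ2 ≠ 0 := by positivity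
    rw [hδ2]
    field_simp
    ring
  have hmain : ∀ t ∈ Icc (0:ℝ) T,
      HasDerivWithinAt F0 ((γ1 + γ2) / (2 * lam) * a ^ 2 - F0 t ^ 2) (Icc 0 T) t ∧
      HasDerivWithinAt E0 ((γ1 + γ2) / (2 * lam) * β * a - E0 t * F0 t) (Icc 0 T) t ∧
      HasDerivWithinAt D0 (-(γ2 * s / (2 * lam)) * a ^ 2 - F0 t * D0 t) (Icc 0 T) t := by
    intro t _
    refine ⟨?_, (hE0deriv t).hasDerivWithinAt, (hD0deriv t).hasDerivWithinAt⟩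
    have := (hFderiv t).hasDerivWithinAt (s := Icc 0 T)
    rw [hδ2] at this
    refine this.congr_deriv ?_
    ring
  have hF0T : F0 T = 0 := by rw [hF0]; simp
  have hE0T : E0 T = 0 := by rw [hE0]; simp [hF0T]
  have hD0T : D0 T = 0 := by rw [hD0]; simp [hF0T]
  refine ⟨hmain, hF0T, hE0T, hD0T, ?_⟩
  intro hγ
  have hF0cd : ContDiffOn ℝ 1 F0 (Icc 0 T) := by
    rw [hF0]
    apply ContDiff.contDiffOn
    exact contDiff_const.mul (contDiff_tanh.comp (contDiff_const.mul (contDiff_const.sub contDiff_id)))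
  have hE0cd : ContDiffOn ℝ 1 E0 (Icc 0 T) := by
    rw [hE0]
    exact ContDiffOn.const_smul (β / a) hF0cd |>.congr (fun x _ => by simp [smul_eq_mul])
  refine ⟨contDiffOn_const, contDiffOn_const, hE0cd, hF0cd, ?_, rfl, rfl, hE0T, hF0T⟩
  intro t ht
  obtain ⟨h1, h2, _⟩ := hmain t ht
  refine ⟨?_, ?_, ?_, ?_⟩
  · have : (γ1 - γ2) / 2 * β * (a + 0) - 0 * E0 t = 0 := by rw [hγ]; ring
    rw [this]; exact hasDerivWithinAt_const t _ 0
  · have : (γ1 - γ2) / 2 * (a + 0) ^ 2 - 0 * F0 t = 0 := by rw [hγ]; ring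
    rw [this]; exact hasDerivWithinAt_const t _ 0
  · simpa using h2
  · simpa using h1
end

section
/- Let (B, C, E, F) be a continuously differentiable solution on [0, T] of the coupled Riccati system, let γ̄ = γ¹γ²/(γ¹ + γ²), let A(t) = ∫ₜᵀ ( C(u)D(u) + γ̄ s a² − (γ² s/2)(a + B(u))² ) du and D(t) = ∫ₜᵀ exp(∫ₜᵘ F(r) dr) (γ² s/(2λ)) (a + B(u))² du, and define f(t, x, y) = A(t) + B(t) x + C(t) y and g(t, x, y) = D(t) + E(t) x + F(t) y on [0, T] × ℝ². Then for all (t, x, y) ∈ [0, T) × ℝ², fₜ + (1/2) f_{xx} + f_y g = −γ̄ s a² + (γ² s/2)(a + f_x)² + ((γ¹ − γ²)/2) β (a + f_x) x + ((γ¹ − γ²)/2)(a + f_x)² y, and gₜ + (1/2) g_{xx} + g_y g = ((γ¹ + γ²)/(2λ)) β (a + f_x) x − (γ² s/(2λ))(a + f_x)² + ((γ¹ + γ²)/(2λ))(a + f_x)² y, with terminal conditions f(T, x, y) = g(T, x, y) = 0. -/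
open Set

section Helpers

open MeasureTheory in
lemma myFTC_left {φ : ℝ → ℝ} {T : ℝ} (hφ : ContinuousOn φ (Icc 0 T))
    {t : ℝ} (ht : t ∈ Icc (0:ℝ) T) :
    HasDerivWithinAt (fun u => ∫ x in u..T, φ x) (-φ t) (Icc 0 T) t := by
  haveI : Fact (t ∈ Icc (0:ℝ) T) := ⟨ht⟩
  have hint : IntervalIntegrable φ volume t T := by
    apply ContinuousOn.intervalIntegrable
    apply hφ.mono
    rw [uIcc_of_le ht.2]
    exact Icc_subset_Icc ht.1 le_rfl
  exact intervalIntegral.integral_hasDerivWithinAt_left hint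
    ⟨Icc 0 T, self_mem_nhdsWithin, hφ.aestronglyMeasurable measurableSet_Icc⟩ (hφ t ht)

open MeasureTheory in
lemma myFTC_right {φ : ℝ → ℝ} {T : ℝ} (hφ : ContinuousOn φ (Icc 0 T))
    {t : ℝ} (ht : t ∈ Icc (0:ℝ) T) :
    HasDerivWithinAt (fun u => ∫ x in (0:ℝ)..u, φ x) (φ t) (Icc 0 T) t := by
  haveI : Fact (t ∈ Icc (0:ℝ) T) := ⟨ht⟩
  have hint : IntervalIntegrable φ volume 0 t := by
    apply ContinuousOn.intervalIntegrable
    apply hφ.mono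
    rw [uIcc_of_le ht.1]
    exact Icc_subset_Icc le_rfl ht.2
  exact intervalIntegral.integral_hasDerivWithinAt_right hint
    ⟨Icc 0 T, self_mem_nhdsWithin, hφ.aestronglyMeasurable measurableSet_Icc⟩ (hφ t ht)

end Helpers

/-- Given a solution `(B, C, E, F)` of the coupled Riccati system and the associated `A`, `D`,
the affine functions `f(t,x,y) = A(t) + B(t)x + C(t)y` and `g(t,x,y) = D(t) + E(t)x + F(t)y`
solve the semilinear PDE system on `[0, T) × ℝ²` with terminal conditions
`f(T,x,y) = g(T,x,y) = 0`. -/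
theorem affine_functions_solve_pde
    (γ1 γ2 lam β a s T : ℝ)
    (hγ1 : 0 < γ1) (hγ2 : 0 < γ2) (hlam : 0 < lam) (hβ : 0 < β) (ha : 0 < a) (hT : 0 < T)
    (B C E F : ℝ → ℝ) (hsol : RiccatiSystem γ1 γ2 lam β a T B C E F)
    (γbar : ℝ) (hγbar : γbar = γ1 * γ2 / (γ1 + γ2))
    (D A : ℝ → ℝ)
    (hD : D = fun t => ∫ u in t..T, Real.exp (∫ r in t..u, F r) * (γ2 * s / (2 * lam)) *
      (a + B u) ^ 2)
    (hA : A = fun t => ∫ u in t..T,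
      (C u * D u + γbar * s * a ^ 2 - γ2 * s / 2 * (a + B u) ^ 2))
    (f g : ℝ → ℝ → ℝ → ℝ)
    (hf : f = fun t x y => A t + B t * x + C t * y)
    (hg : g = fun t x y => D t + E t * x + F t * y) :
    (∀ t ∈ Ico (0:ℝ) T, ∀ x y : ℝ,
      derivWithin (fun τ => f τ x y) (Icc 0 T) t
          + 1 / 2 * deriv (fun x' => deriv (fun x'' => f t x'' y) x') x
          + deriv (fun y' => f t x y') y * g t x y
        = -(γbar * s * a ^ 2) + γ2 * s / 2 * (a + deriv (fun x' => f t x' y) x) ^ 2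
            + (γ1 - γ2) / 2 * β * (a + deriv (fun x' => f t x' y) x) * x
            + (γ1 - γ2) / 2 * (a + deriv (fun x' => f t x' y) x) ^ 2 * y ∧
      derivWithin (fun τ => g τ x y) (Icc 0 T) t
          + 1 / 2 * deriv (fun x' => deriv (fun x'' => g t x'' y) x') x
          + deriv (fun y' => g t x y') y * g t x y
        = (γ1 + γ2) / (2 * lam) * β * (a + deriv (fun x' => f t x' y) x) * x
            - γ2 * s / (2 * lam) * (a + deriv (fun x' => f t x' y) x) ^ 2
            + (γ1 + γ2) / (2 * lam) * (a + deriv (fun x' => f t x' y) x) ^ 2 * y) ∧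
    (∀ x y : ℝ, f T x y = 0 ∧ g T x y = 0) := by
  obtain ⟨hB1, hC1, hE1, hF1, hODE, hBT, hCT, hET, hFT⟩ := hsol
  have hBc : ContinuousOn B (Icc 0 T) := hB1.continuousOn
  have hCc : ContinuousOn C (Icc 0 T) := hC1.continuousOn
  have hFc : ContinuousOn F (Icc 0 T) := hF1.continuousOn
  set I : ℝ → ℝ := fun τ => ∫ r in (0:ℝ)..τ, F r with hIdef
  have hI : ∀ t ∈ Icc (0:ℝ) T, HasDerivWithinAt I (F t) (Icc 0 T) t :=
    fun t ht => myFTC_right hFc ht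
  have hIc : ContinuousOn I (Icc 0 T) := fun t ht => (hI t ht).continuousWithinAt
  set ψ : ℝ → ℝ := fun u => Real.exp (I u) * (γ2 * s / (2 * lam)) * (a + B u) ^ 2 with hψdef
  have hψc : ContinuousOn ψ (Icc 0 T) :=
    ((Real.continuous_exp.comp_continuousOn hIc).mul continuousOn_const).mul
      ((continuousOn_const.add hBc).pow 2)
  set J : ℝ → ℝ := fun τ => ∫ u in τ..T, ψ u with hJdef
  have hJ : ∀ t ∈ Icc (0:ℝ) T, HasDerivWithinAt J (-ψ t) (Icc 0 T) t :=
    fun t ht => myFTC_left hψc ht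
  -- D equals J / exp ∘ I on [0, T]
  have hDeq : ∀ t ∈ Icc (0:ℝ) T, D t = J t / Real.exp (I t) := by
    intro t ht
    rw [hD]
    have hcong : EqOn
        (fun u => Real.exp (∫ r in t..u, F r) * (γ2 * s / (2 * lam)) * (a + B u) ^ 2)
        (fun u => ψ u / Real.exp (I t)) (uIcc t T) := by
      intro u hu
      have hu' : u ∈ Icc (0:ℝ) T := by
        rw [uIcc_of_le ht.2] at hu
        exact ⟨le_trans ht.1 hu.1, hu.2⟩
      have hiu : IntervalIntegrable F MeasureTheory.volume 0 u := by
        apply ContinuousOn.intervalIntegrable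
        apply hFc.mono
        rw [uIcc_of_le hu'.1]
        exact Icc_subset_Icc le_rfl hu'.2
      have hit : IntervalIntegrable F MeasureTheory.volume 0 t := by
        apply ContinuousOn.intervalIntegrable
        apply hFc.mono
        rw [uIcc_of_le ht.1]
        exact Icc_subset_Icc le_rfl ht.2
      have h1 : I u - I t = ∫ r in t..u, F r :=
        intervalIntegral.integral_interval_sub_left hiu hit
      simp only [hψdef]
      rw [← h1, Real.exp_sub]
      ring
    beta_reduce
    rw [intervalIntegral.integral_congr hcong, intervalIntegral.integral_div]
  have hD' : ∀ t ∈ Icc (0:ℝ) T, HasDerivWithinAt D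
      (-(F t) * D t - γ2 * s / (2 * lam) * (a + B t) ^ 2) (Icc 0 T) t := by
    intro t ht
    have hexp : HasDerivWithinAt (fun τ => Real.exp (I τ)) (Real.exp (I t) * F t)
        (Icc 0 T) t := by
      exact (Real.hasDerivAt_exp (I t)).comp_hasDerivWithinAt t (hI t ht)
    have hdiv := (hJ t ht).div hexp (Real.exp_ne_zero (I t))
    have heq : (-ψ t * Real.exp (I t) - J t * (Real.exp (I t) * F t)) / Real.exp (I t) ^ 2
        = -(F t) * D t - γ2 * s / (2 * lam) * (a + B t) ^ 2 := by
      rw [hDeq t ht]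
      simp only [hψdef]
      field_simp
      ring
    rw [heq] at hdiv
    exact hdiv.congr (fun u hu => hDeq u hu) (hDeq t ht)
  have hDc : ContinuousOn D (Icc 0 T) := fun t ht => (hD' t ht).continuousWithinAt
  have hA' : ∀ t ∈ Icc (0:ℝ) T, HasDerivWithinAt A
      (-(C t * D t + γbar * s * a ^ 2 - γ2 * s / 2 * (a + B t) ^ 2)) (Icc 0 T) t := by
    intro t ht
    rw [hA]
    exact myFTC_left (((hCc.mul hDc).add continuousOn_const).sub
      (continuousOn_const.mul ((continuousOn_const.add hBc).pow 2))) ht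
  constructor
  · intro t ht x y
    have htI : t ∈ Icc (0:ℝ) T := Ico_subset_Icc_self ht
    have hud : UniqueDiffWithinAt ℝ (Icc (0:ℝ) T) t := (uniqueDiffOn_Icc hT) t htI
    obtain ⟨hBt, hCt, hEt, hFt⟩ := hODE t htI
    -- time derivatives
    have hft : derivWithin (fun τ => f τ x y) (Icc 0 T) t
        = -(C t * D t + γbar * s * a ^ 2 - γ2 * s / 2 * (a + B t) ^ 2)
          + ((γ1 - γ2) / 2 * β * (a + B t) - C t * E t) * x
          + ((γ1 - γ2) / 2 * (a + B t) ^ 2 - C t * F t) * y := by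
      have h1 : HasDerivWithinAt (fun τ => f τ x y)
          (-(C t * D t + γbar * s * a ^ 2 - γ2 * s / 2 * (a + B t) ^ 2)
            + ((γ1 - γ2) / 2 * β * (a + B t) - C t * E t) * x
            + ((γ1 - γ2) / 2 * (a + B t) ^ 2 - C t * F t) * y) (Icc 0 T) t := by
        rw [hf]
        exact ((hA' t htI).add (hBt.mul_const x)).add (hCt.mul_const y)
      exact h1.derivWithin hud
    have hgt : derivWithin (fun τ => g τ x y) (Icc 0 T) t
        = (-(F t) * D t - γ2 * s / (2 * lam) * (a + B t) ^ 2)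
          + ((γ1 + γ2) / (2 * lam) * β * (a + B t) - E t * F t) * x
          + ((γ1 + γ2) / (2 * lam) * (a + B t) ^ 2 - F t ^ 2) * y := by
      have h1 : HasDerivWithinAt (fun τ => g τ x y)
          ((-(F t) * D t - γ2 * s / (2 * lam) * (a + B t) ^ 2)
            + ((γ1 + γ2) / (2 * lam) * β * (a + B t) - E t * F t) * x
            + ((γ1 + γ2) / (2 * lam) * (a + B t) ^ 2 - F t ^ 2) * y) (Icc 0 T) t := by
        rw [hg]
        exact (((hD' t htI)).add (hEt.mul_const x)).add (hFt.mul_const y)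
      exact h1.derivWithin hud
    -- spatial derivatives of f
    have hfx : ∀ x' : ℝ, deriv (fun x'' => f t x'' y) x' = B t := by
      intro x'
      have h1 : HasDerivAt (fun x'' => f t x'' y) (B t) x' := by
        rw [hf]
        simpa using ((((hasDerivAt_id x').const_mul (B t)).const_add (A t)).add_const (C t * y))
      exact h1.deriv
    have hfxx : deriv (fun x' => deriv (fun x'' => f t x'' y) x') x = 0 := by
      have h2 : (fun x' => deriv (fun x'' => f t x'' y) x') = fun _ => B t := funext hfx
      rw [h2, deriv_const]
    have hfy : deriv (fun y' => f t x y') y = C t := by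
      have h1 : HasDerivAt (fun y' => f t x y') (C t) y := by
        rw [hf]
        simpa using (((hasDerivAt_id y).const_mul (C t)).const_add (A t + B t * x))
      exact h1.deriv
    -- spatial derivatives of g
    have hgx : ∀ x' : ℝ, deriv (fun x'' => g t x'' y) x' = E t := by
      intro x'
      have h1 : HasDerivAt (fun x'' => g t x'' y) (E t) x' := by
        rw [hg]
        simpa using ((((hasDerivAt_id x').const_mul (E t)).const_add (D t)).add_const (F t * y))
      exact h1.deriv
    have hgxx : deriv (fun x' => deriv (fun x'' => g t x'' y) x') x = 0 := by
      have h2 : (fun x' => deriv (fun x'' => g t x'' y) x') = fun _ => E t := funext hgx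
      rw [h2, deriv_const]
    have hgy : deriv (fun y' => g t x y') y = F t := by
      have h1 : HasDerivAt (fun y' => g t x y') (F t) y := by
        rw [hg]
        simpa using (((hasDerivAt_id y).const_mul (F t)).const_add (D t + E t * x))
      exact h1.deriv
    have hgval : g t x y = D t + E t * x + F t * y := by rw [hg]
    constructor
    · rw [hft, hfxx, hfy, hfx x, hgval]
      ring
    · rw [hgt, hgxx, hgy, hfx x, hgval]
      ring
  · intro x y
    have hAT : A T = 0 := by rw [hA]; simp
    have hDT : D T = 0 := by rw [hD]; simp
    constructor
    · rw [hf]; simp [hAT, hBT, hCT]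
    · rw [hg]; simp [hDT, hET, hFT]
end

section
/- Let γ̂, λ > 0, T > 0, and let B̃, B̃′ : [0, T] → ℝ be continuous bounded functions with associated solutions F^{B̃} and F^{B̃′} of the Riccati ODE F(t) = −∫ₜᵀ ( (γ̂/λ) B̃(s)² − F(s)² ) ds (with B̃ replaced by B̃′ in the second case). Then for all t ∈ [0, T], |F^{B̃}(t) − F^{B̃′}(t)| ≤ (γ̂/λ) ( ‖B̃‖_∞ + ‖B̃′‖_∞ ) ‖B̃ − B̃′‖_∞ (T − t). -/
open Set

/-- The supremum norm of `f` on the interval `[0, T]`. -/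
noncomputable def supNorm (T : ℝ) (f : ℝ → ℝ) : ℝ :=
  sSup ((fun t => |f t|) '' Icc 0 T)

lemma abs_le_supNorm (T : ℝ) (f : ℝ → ℝ) (hf : ContinuousOn f (Icc 0 T)) :
    ∀ t ∈ Icc (0:ℝ) T, |f t| ≤ supNorm T f := by
  intro t ht
  have hbdd : BddAbove ((fun t => |f t|) '' Icc 0 T) :=
    (isCompact_Icc.image_of_continuousOn hf.abs).bddAbove
  exact le_csSup hbdd ⟨t, ht, rfl⟩

lemma supNorm_nonneg (T : ℝ) (hT : 0 ≤ T) (f : ℝ → ℝ) (hf : ContinuousOn f (Icc 0 T)) :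
    0 ≤ supNorm T f :=
  le_trans (abs_nonneg (f 0)) (abs_le_supNorm T f hf 0 ⟨le_refl 0, hT⟩)

/-- If `φ(T) ≤ 0` and `φ' ≥ 0` wherever `φ > 0`, then `φ ≤ 0` on `[c, T]`. -/
lemma le_zero_of_deriv (c T : ℝ) (φ φd : ℝ → ℝ)
    (hd : ∀ t ∈ Icc c T, HasDerivAt φ (φd t) t)
    (hT : φ T ≤ 0)
    (hpos : ∀ t ∈ Icc c T, 0 < φ t → 0 ≤ φd t) :
    ∀ t ∈ Icc c T, φ t ≤ 0 := by
  intro t₀ ht₀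
  by_contra hcon
  push_neg at hcon
  have ht₀T : t₀ < T := by
    rcases lt_or_eq_of_le ht₀.2 with h | h
    · exact h
    · exact absurd (h ▸ hT) (not_le.2 hcon)
  set S : Set ℝ := Icc t₀ T ∩ φ ⁻¹' (Iic 0) with hS
  have hTS : T ∈ S := ⟨⟨ht₀T.le, le_refl T⟩, hT⟩
  have hcφ : ContinuousOn φ (Icc t₀ T) := fun x hx =>
    ((hd x ⟨le_trans ht₀.1 hx.1, hx.2⟩).continuousAt).continuousWithinAt
  have hScl : IsClosed S := hcφ.preimage_isClosed_of_isClosed isClosed_Icc isClosed_Iic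
  have hbdd : BddBelow S := ⟨t₀, fun x hx => hx.1.1⟩
  set s₁ := sInf S with hs₁
  have hs₁S : s₁ ∈ S := hScl.csInf_mem ⟨T, hTS⟩ hbdd
  have hts : t₀ < s₁ := by
    rcases lt_or_eq_of_le hs₁S.1.1 with h | h
    · exact h
    · exact absurd (h ▸ hs₁S.2) (not_le.2 hcon)
  have hIcc_sub : Icc t₀ s₁ ⊆ Icc c T := Icc_subset_Icc ht₀.1 hs₁S.1.2
  have hposIco : ∀ x ∈ Ico t₀ s₁, 0 < φ x := by
    intro x hx
    by_contra hx0
    push_neg at hx0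
    have hxS : x ∈ S := ⟨⟨hx.1, le_trans hx.2.le hs₁S.1.2⟩, hx0⟩
    exact absurd (csInf_le hbdd hxS) (not_le.2 hx.2)
  have hmono : MonotoneOn φ (Icc t₀ s₁) := by
    apply monotoneOn_of_deriv_nonneg (convex_Icc _ _)
    · exact fun x hx => ((hd x (hIcc_sub hx)).continuousAt).continuousWithinAt
    · intro x hx
      rw [interior_Icc] at hx
      exact ((hd x (hIcc_sub (Ioo_subset_Icc_self hx))).differentiableAt).differentiableWithinAt
    · intro x hx
      rw [interior_Icc] at hx
      have hx' := Ioo_subset_Icc_self hx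
      rw [(hd x (hIcc_sub hx')).deriv]
      exact hpos x (hIcc_sub hx') (hposIco x ⟨hx.1.le, hx.2⟩)
  have hle := hmono (left_mem_Icc.2 hts.le) (right_mem_Icc.2 hts.le) hts.le
  have h0 : φ s₁ ≤ 0 := hs₁S.2
  linarith

/-- A solution of `F' = q - F²` with `q ≥ 0`, `F(T) = 0` is nonpositive on `[0, T]`. -/
lemma riccati_nonpos (T : ℝ) (q Fb Fd : ℝ → ℝ)
    (hd : ∀ t, HasDerivAt Fb (Fd t) t)
    (hq : ∀ t ∈ Icc (0:ℝ) T, 0 ≤ q t)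
    (heq : ∀ t ∈ Icc (0:ℝ) T, Fd t = q t - Fb t ^ 2)
    (hT : Fb T = 0) :
    ∀ t ∈ Icc (0:ℝ) T, Fb t ≤ 0 := by
  have hFc : Continuous Fb := by
    rw [continuous_iff_continuousAt]; exact fun t => (hd t).continuousAt
  set w : ℝ → ℝ := fun t => Real.exp (∫ s in T..t, Fb s) with hw
  have hwd : ∀ t, HasDerivAt w (Fb t * w t) t := by
    intro t
    have h1 : HasDerivAt (fun u => ∫ s in T..u, Fb s) (Fb t) t :=
      intervalIntegral.integral_hasDerivAt_right (hFc.intervalIntegrable _ _)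
        (hFc.stronglyMeasurableAtFilter _ _) hFc.continuousAt
    have h2 := h1.exp
    simpa [hw, mul_comm] using h2
  set h : ℝ → ℝ := fun t => Fb t * w t with hhdef
  have hhd : ∀ t, HasDerivAt h (Fd t * w t + Fb t * (Fb t * w t)) t :=
    fun t => (hd t).mul (hwd t)
  have hmono : MonotoneOn h (Icc 0 T) := by
    apply monotoneOn_of_deriv_nonneg (convex_Icc _ _)
    · exact fun x _ => ((hhd x).continuousAt).continuousWithinAt
    · exact fun x _ => ((hhd x).differentiableAt).differentiableWithinAt
    · intro x hx
      rw [interior_Icc] at hx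
      have hx' : x ∈ Icc (0:ℝ) T := Ioo_subset_Icc_self hx
      rw [(hhd x).deriv, heq x hx']
      have hwpos : 0 < w x := Real.exp_pos _
      nlinarith [hq x hx', sq_nonneg (Fb x)]
  intro t ht
  have hTmem : T ∈ Icc (0:ℝ) T := ⟨le_trans ht.1 ht.2, le_refl T⟩
  have h1 : h t ≤ h T := hmono ht hTmem ht.2
  have h2 : h T = 0 := by simp [hhdef, hT]
  have hwpos : 0 < w t := Real.exp_pos _
  simp only [hhdef] at h1 h2
  nlinarith

lemma claim_one (γhat lam T C : ℝ) (hgl : 0 < γhat / lam) (hCnn : 0 ≤ C)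
    (B1 B2 F1 F2 Fb1 Fb2 Gb1 Gb2 : ℝ → ℝ)
    (hFb1d : ∀ t, HasDerivAt Fb1 (Gb1 t) t) (hFb2d : ∀ t, HasDerivAt Fb2 (Gb2 t) t)
    (hFb1T : Fb1 T = 0) (hFb2T : Fb2 T = 0)
    (hGb1 : ∀ s ∈ Icc (0:ℝ) T, Gb1 s = γhat / lam * B1 s ^ 2 - F1 s ^ 2)
    (hGb2 : ∀ s ∈ Icc (0:ℝ) T, Gb2 s = γhat / lam * B2 s ^ 2 - F2 s ^ 2)
    (hF1 : ∀ s ∈ Icc (0:ℝ) T, Fb1 s = F1 s) (hF2 : ∀ s ∈ Icc (0:ℝ) T, Fb2 s = F2 s)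
    (hF1neg : ∀ s ∈ Icc (0:ℝ) T, F1 s ≤ 0) (hF2neg : ∀ s ∈ Icc (0:ℝ) T, F2 s ≤ 0)
    (hbd : ∀ s ∈ Icc (0:ℝ) T, -C ≤ γhat / lam * (B1 s ^ 2 - B2 s ^ 2)) :
    ∀ t ∈ Icc (0:ℝ) T, F1 t - F2 t ≤ C * (T - t) := by
  intro t ht
  have key := le_zero_of_deriv 0 T (fun s => Fb1 s - Fb2 s - C * (T - s))
      (fun s => Gb1 s - Gb2 s + C) ?_ ?_ ?_ t ht
  · have e1 := hF1 t ht
    have e2 := hF2 t ht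
    simp only [e1, e2] at key
    linarith
  · intro s _
    have h1 := (hFb1d s).sub (hFb2d s)
    have h2 : HasDerivAt (fun u => C * (T - u)) (C * (-1)) s :=
      ((hasDerivAt_id s).const_sub T).const_mul C
    have h3 := h1.sub h2
    exact h3.congr_deriv (by ring)
  · simp [hFb1T, hFb2T]
  · intro s hs hφ
    rw [hF1 s hs, hF2 s hs] at hφ
    have hTs : 0 ≤ T - s := by linarith [hs.2]
    have hD : 0 ≤ F1 s - F2 s := by nlinarith [mul_nonneg hCnn hTs]
    have ha1 := hF1neg s hs
    have ha2 := hF2neg s hs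
    have hq := hbd s hs
    rw [hGb1 s hs, hGb2 s hs]
    nlinarith [mul_nonneg (by linarith : (0:ℝ) ≤ -(F1 s + F2 s)) hD]

/-- Stability of the Riccati solution `F^{B̃}` with respect to `B̃`:
`|F^{B̃}(t) − F^{B̃′}(t)| ≤ (γ̂/λ)(‖B̃‖_∞ + ‖B̃′‖_∞)‖B̃ − B̃′‖_∞(T − t)` on `[0, T]`. -/
theorem riccati_F_stability
    (γhat lam T : ℝ) (hγ : 0 < γhat) (hlam : 0 < lam) (hT : 0 < T)
    (Btil Btil' : ℝ → ℝ)
    (hB : ContinuousOn Btil (Icc 0 T)) (hB' : ContinuousOn Btil' (Icc 0 T))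
    (F F' : ℝ → ℝ)
    (hFcont : ContinuousOn F (Icc 0 T)) (hF'cont : ContinuousOn F' (Icc 0 T))
    (hFsol : ∀ t ∈ Icc (0:ℝ) T, F t = -∫ s in t..T, (γhat / lam * Btil s ^ 2 - F s ^ 2))
    (hF'sol : ∀ t ∈ Icc (0:ℝ) T, F' t = -∫ s in t..T, (γhat / lam * Btil' s ^ 2 - F' s ^ 2)) :
    ∀ t ∈ Icc (0:ℝ) T,
      |F t - F' t| ≤ γhat / lam * (supNorm T Btil + supNorm T Btil') *
        supNorm T (fun u => Btil u - Btil' u) * (T - t) := by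
  have hT0 : (0:ℝ) ≤ T := hT.le
  have hgl : 0 < γhat / lam := div_pos hγ hlam
  -- sup norm facts
  have hBd : ContinuousOn (fun u => Btil u - Btil' u) (Icc 0 T) := hB.sub hB'
  have hNB := abs_le_supNorm T Btil hB
  have hNB' := abs_le_supNorm T Btil' hB'
  have hND := abs_le_supNorm T (fun u => Btil u - Btil' u) hBd
  have hNBnn := supNorm_nonneg T hT0 Btil hB
  have hNB'nn := supNorm_nonneg T hT0 Btil' hB'
  have hNDnn := supNorm_nonneg T hT0 _ hBd
  set NB := supNorm T Btil
  set NB' := supNorm T Btil'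
  set ND := supNorm T (fun u => Btil u - Btil' u)
  set C := γhat / lam * (NB + NB') * ND with hC
  have hCnn : 0 ≤ C := mul_nonneg (mul_nonneg hgl.le (by linarith)) hNDnn
  -- projection onto [0, T]
  set p : ℝ → ℝ := fun s => min T (max 0 s) with hp
  have hpc : Continuous p := continuous_const.min (continuous_const.max continuous_id)
  have hpmem : ∀ s, p s ∈ Icc (0:ℝ) T :=
    fun s => ⟨le_min hT0 (le_max_left 0 s), min_le_left _ _⟩
  have hpid : ∀ s ∈ Icc (0:ℝ) T, p s = s := by
    intro s hs
    simp [hp, max_eq_right hs.1, min_eq_right hs.2]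
  -- extended integrands and solutions
  set G : ℝ → ℝ := fun s => γhat / lam * Btil s ^ 2 - F s ^ 2 with hG
  set G' : ℝ → ℝ := fun s => γhat / lam * Btil' s ^ 2 - F' s ^ 2 with hG'
  have hGc : ContinuousOn G (Icc 0 T) := (continuousOn_const.mul (hB.pow 2)).sub (hFcont.pow 2)
  have hG'c : ContinuousOn G' (Icc 0 T) := (continuousOn_const.mul (hB'.pow 2)).sub (hF'cont.pow 2)
  set Gb : ℝ → ℝ := fun s => G (p s) with hGbdef
  set Gb' : ℝ → ℝ := fun s => G' (p s) with hGb'def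
  have hGbc : Continuous Gb := hGc.comp_continuous hpc hpmem
  have hGb'c : Continuous Gb' := hG'c.comp_continuous hpc hpmem
  have hGbeq : ∀ s ∈ Icc (0:ℝ) T, Gb s = G s := fun s hs => by show G (p s) = G s; rw [hpid s hs]
  have hGb'eq : ∀ s ∈ Icc (0:ℝ) T, Gb' s = G' s := fun s hs => by show G' (p s) = G' s; rw [hpid s hs]
  set Fb : ℝ → ℝ := fun t => ∫ s in T..t, Gb s with hFbdef
  set Fb' : ℝ → ℝ := fun t => ∫ s in T..t, Gb' s with hFb'def
  have hFbd : ∀ t, HasDerivAt Fb (Gb t) t := fun t =>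
    intervalIntegral.integral_hasDerivAt_right (hGbc.intervalIntegrable _ _)
      (hGbc.stronglyMeasurableAtFilter _ _) hGbc.continuousAt
  have hFb'd : ∀ t, HasDerivAt Fb' (Gb' t) t := fun t =>
    intervalIntegral.integral_hasDerivAt_right (hGb'c.intervalIntegrable _ _)
      (hGb'c.stronglyMeasurableAtFilter _ _) hGb'c.continuousAt
  have hFbT : Fb T = 0 := by simp [hFbdef]
  have hFb'T : Fb' T = 0 := by simp [hFb'def]
  have hFbF : ∀ t ∈ Icc (0:ℝ) T, Fb t = F t := by
    intro t ht
    have hsub : uIcc t T ⊆ Icc 0 T := by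
      rw [uIcc_of_le ht.2]
      exact Icc_subset_Icc ht.1 le_rfl
    have hcongr : ∫ s in t..T, G s = ∫ s in t..T, Gb s :=
      intervalIntegral.integral_congr (fun s hs => (hGbeq s (hsub hs)).symm)
    rw [hFsol t ht, hFbdef]
    simp only
    rw [intervalIntegral.integral_symm, hcongr]
  have hFb'F : ∀ t ∈ Icc (0:ℝ) T, Fb' t = F' t := by
    intro t ht
    have hsub : uIcc t T ⊆ Icc 0 T := by
      rw [uIcc_of_le ht.2]
      exact Icc_subset_Icc ht.1 le_rfl
    have hcongr : ∫ s in t..T, G' s = ∫ s in t..T, Gb' s :=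
      intervalIntegral.integral_congr (fun s hs => (hGb'eq s (hsub hs)).symm)
    rw [hF'sol t ht, hFb'def]
    simp only
    rw [intervalIntegral.integral_symm, hcongr]
  -- nonpositivity of F and F'
  have hFneg : ∀ t ∈ Icc (0:ℝ) T, F t ≤ 0 := by
    intro t ht
    rw [← hFbF t ht]
    refine riccati_nonpos T (fun s => γhat / lam * Btil s ^ 2) Fb Gb hFbd
      (fun s _ => by positivity) ?_ hFbT t ht
    intro s hs
    rw [hGbeq s hs, hG, hFbF s hs]
  have hF'neg : ∀ t ∈ Icc (0:ℝ) T, F' t ≤ 0 := by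
    intro t ht
    rw [← hFb'F t ht]
    refine riccati_nonpos T (fun s => γhat / lam * Btil' s ^ 2) Fb' Gb' hFb'd
      (fun s _ => by positivity) ?_ hFb'T t ht
    intro s hs
    rw [hGb'eq s hs, hG', hFb'F s hs]
  -- pointwise bound on the driving term
  have habs : ∀ s ∈ Icc (0:ℝ) T, |γhat / lam * (Btil s ^ 2 - Btil' s ^ 2)| ≤ C := by
    intro s hs
    have h1 : |Btil s - Btil' s| ≤ ND := hND s hs
    have h2 : |Btil s + Btil' s| ≤ NB + NB' :=
      (abs_add_le _ _).trans (add_le_add (hNB s hs) (hNB' s hs))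
    have h3 : Btil s ^ 2 - Btil' s ^ 2 = (Btil s - Btil' s) * (Btil s + Btil' s) := by ring
    rw [abs_mul, abs_of_pos hgl, h3, abs_mul]
    calc γhat / lam * (|Btil s - Btil' s| * |Btil s + Btil' s|)
        ≤ γhat / lam * (ND * (NB + NB')) := by
          apply mul_le_mul_of_nonneg_left _ hgl.le
          exact mul_le_mul h1 h2 (abs_nonneg _) hNDnn
      _ = C := by rw [hC]; ring
  have hbd1 : ∀ s ∈ Icc (0:ℝ) T, -C ≤ γhat / lam * (Btil s ^ 2 - Btil' s ^ 2) :=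
    fun s hs => (abs_le.mp (habs s hs)).1
  have hbd2 : ∀ s ∈ Icc (0:ℝ) T, -C ≤ γhat / lam * (Btil' s ^ 2 - Btil s ^ 2) := by
    intro s hs
    have := (abs_le.mp (habs s hs)).2
    nlinarith
  -- the two one-sided bounds
  have hclaim1 := claim_one γhat lam T C hgl hCnn Btil Btil' F F' Fb Fb' Gb Gb'
    hFbd hFb'd hFbT hFb'T (fun s hs => by rw [hGbeq s hs]) (fun s hs => by rw [hGb'eq s hs])
    hFbF hFb'F hFneg hF'neg hbd1
  have hclaim2 := claim_one γhat lam T C hgl hCnn Btil' Btil F' F Fb' Fb Gb' Gb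
    hFb'd hFbd hFb'T hFbT (fun s hs => by rw [hGb'eq s hs]) (fun s hs => by rw [hGbeq s hs])
    hFb'F hFbF hF'neg hFneg hbd2
  intro t ht
  have h1 := hclaim1 t ht
  have h2 := hclaim2 t ht
  rw [abs_le]
  constructor <;> [linarith; linarith]
end

section
/- Let γ̂, λ > 0, β > 0, T > 0, and let B̃, B̃′ : [0, T] → ℝ be continuous bounded functions. Let E^{B̃}(t) = −(γ̂ β/λ) ∫ₜᵀ B̃(s) exp(∫ₜˢ F^{B̃}(r) dr) ds and similarly for E^{B̃′}. Then ‖E^{B̃} − E^{B̃′}‖_∞ ≤ (γ̂ β T/λ) ( 1 + (γ̂ T²/λ) ‖B̃′‖_∞ ( ‖B̃‖_∞ + ‖B̃′‖_∞ ) ) ‖B̃ − B̃′‖_∞. -/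
open Set

open intervalIntegral MeasureTheory

lemma hasDerivWithinAt_of_sol {T : ℝ} {F g : ℝ → ℝ}
    (hg : ContinuousOn g (Icc 0 T))
    (hF : ∀ t ∈ Icc (0:ℝ) T, F t = -∫ s in t..T, g s) :
    ∀ t ∈ Icc (0:ℝ) T, HasDerivWithinAt F (g t) (Icc 0 T) t := by
  intro t ht
  haveI : Fact (t ∈ Icc (0:ℝ) T) := ⟨ht⟩
  have hint : ∀ u ∈ Icc (0:ℝ) T, IntervalIntegrable g volume 0 u := fun u hu =>
    (hg.mono (by rw [uIcc_of_le hu.1]; exact Icc_subset_Icc le_rfl hu.2)).intervalIntegrable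
  have hG : HasDerivWithinAt (fun u => ∫ s in (0:ℝ)..u, g s) (g t) (Icc 0 T) t :=
    integral_hasDerivWithinAt_right (hint t ht)
      (hg.stronglyMeasurableAtFilter_nhdsWithin measurableSet_Icc t) (hg t ht)
  have hC : IntervalIntegrable g volume 0 T := hint T (right_mem_Icc.2 (ht.1.trans ht.2))
  have heq : ∀ u ∈ Icc (0:ℝ) T, F u = (∫ s in (0:ℝ)..u, g s) - ∫ s in (0:ℝ)..T, g s := by
    intro u hu
    rw [hF u hu, ← intervalIntegral.integral_symm,
      ← intervalIntegral.integral_add_adjacent_intervals hC.symm (hint u hu),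
      intervalIntegral.integral_symm]
    ring
  exact (hG.sub_const (∫ s in (0:ℝ)..T, g s)).congr heq (heq t ht)
-- generic: derivative facts → monotone
lemma monotoneOn_of_hasDeriv {T : ℝ} {φ φ' : ℝ → ℝ}
    (hd : ∀ t ∈ Icc (0:ℝ) T, HasDerivWithinAt φ (φ' t) (Icc 0 T) t)
    (h0 : ∀ t ∈ Icc (0:ℝ) T, 0 ≤ φ' t) :
    MonotoneOn φ (Icc 0 T) := by
  refine monotoneOn_of_deriv_nonneg (convex_Icc 0 T)
    (fun t ht => (hd t ht).continuousWithinAt) (fun t ht => ?_) (fun t ht => ?_)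
  · rw [interior_Icc] at ht
    exact ((hd t (Ioo_subset_Icc_self ht)).hasDerivAt (Icc_mem_nhds ht.1 ht.2)).differentiableAt.differentiableWithinAt
  · rw [interior_Icc] at ht
    rw [((hd t (Ioo_subset_Icc_self ht)).hasDerivAt (Icc_mem_nhds ht.1 ht.2)).deriv]
    exact h0 t (Ioo_subset_Icc_self ht)

lemma antitoneOn_of_hasDeriv {T : ℝ} {φ φ' : ℝ → ℝ}
    (hd : ∀ t ∈ Icc (0:ℝ) T, HasDerivWithinAt φ (φ' t) (Icc 0 T) t)
    (h0 : ∀ t ∈ Icc (0:ℝ) T, φ' t ≤ 0) :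
    AntitoneOn φ (Icc 0 T) := by
  refine antitoneOn_of_deriv_nonpos (convex_Icc 0 T)
    (fun t ht => (hd t ht).continuousWithinAt) (fun t ht => ?_) (fun t ht => ?_)
  · rw [interior_Icc] at ht
    exact ((hd t (Ioo_subset_Icc_self ht)).hasDerivAt (Icc_mem_nhds ht.1 ht.2)).differentiableAt.differentiableWithinAt
  · rw [interior_Icc] at ht
    rw [((hd t (Ioo_subset_Icc_self ht)).hasDerivAt (Icc_mem_nhds ht.1 ht.2)).deriv]
    exact h0 t (Ioo_subset_Icc_self ht)
section
variable {T : ℝ}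

lemma hasDerivWithinAt_primitive' {f : ℝ → ℝ}
    (hf : ContinuousOn f (Icc 0 T)) :
    ∀ t ∈ Icc (0:ℝ) T, HasDerivWithinAt (fun u => ∫ s in (0:ℝ)..u, f s) (f t) (Icc 0 T) t := by
  intro t ht
  haveI : Fact (t ∈ Icc (0:ℝ) T) := ⟨ht⟩
  exact integral_hasDerivWithinAt_right
    ((hf.mono (by rw [uIcc_of_le ht.1]; exact Icc_subset_Icc le_rfl ht.2)).intervalIntegrable)
    (hf.stronglyMeasurableAtFilter_nhdsWithin measurableSet_Icc t) (hf t ht)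

lemma hasDerivWithinAt_expPrim {f : ℝ → ℝ}
    (hf : ContinuousOn f (Icc 0 T)) :
    ∀ t ∈ Icc (0:ℝ) T, HasDerivWithinAt (fun u => Real.exp (∫ s in (0:ℝ)..u, f s))
      (Real.exp (∫ s in (0:ℝ)..t, f s) * f t) (Icc 0 T) t :=
  fun t ht => (hasDerivWithinAt_primitive' hf t ht).exp

lemma sol_nonpos {c : ℝ} (hc : 0 ≤ c) {F B : ℝ → ℝ}
    (hFc : ContinuousOn F (Icc 0 T)) (hBc : ContinuousOn B (Icc 0 T))
    (hT : 0 ≤ T)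
    (hF : ∀ t ∈ Icc (0:ℝ) T, F t = -∫ s in t..T, (c * B s ^ 2 - F s ^ 2)) :
    ∀ t ∈ Icc (0:ℝ) T, F t ≤ 0 := by
  set g : ℝ → ℝ := fun s => c * B s ^ 2 - F s ^ 2 with hg
  have hgc : ContinuousOn g (Icc 0 T) :=
    (continuousOn_const.mul (hBc.pow 2)).sub (hFc.pow 2)
  have hFd := hasDerivWithinAt_of_sol hgc hF
  set W : ℝ → ℝ := fun u => Real.exp (∫ s in (0:ℝ)..u, F s) with hWdef
  have hWd := hasDerivWithinAt_expPrim hFc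
  have hφd : ∀ t ∈ Icc (0:ℝ) T, HasDerivWithinAt (fun u => F u * W u)
      (c * B t ^ 2 * W t) (Icc 0 T) t := by
    intro t ht
    have := (hFd t ht).mul (hWd t ht)
    convert this using 1
    show c * B t ^ 2 * W t = g t * W t + F t * (W t * F t)
    simp only [hg]; ring
    all_goals rfl
  have hmono := monotoneOn_of_hasDeriv hφd
    (fun t ht => mul_nonneg (mul_nonneg hc (sq_nonneg _)) (Real.exp_pos _).le)
  intro t ht
  have hTm : T ∈ Icc (0:ℝ) T := right_mem_Icc.2 hT
  have hFT : F T = 0 := by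
    rw [hF T hTm, intervalIntegral.integral_same, neg_zero]
  have h1 : F t * W t ≤ F T * W T := hmono ht hTm ht.2
  rw [hFT, zero_mul] at h1
  have hWpos : 0 < W t := Real.exp_pos _
  nlinarith
end


section
variable {T : ℝ}

lemma sol_diff_bound {c : ℝ} (hT : 0 < T) (hc : 0 ≤ c) {F F' B B' : ℝ → ℝ}
    (hFc : ContinuousOn F (Icc 0 T)) (hF'c : ContinuousOn F' (Icc 0 T))
    (hBc : ContinuousOn B (Icc 0 T)) (hB'c : ContinuousOn B' (Icc 0 T))
    (hF : ∀ t ∈ Icc (0:ℝ) T, F t = -∫ s in t..T, (c * B s ^ 2 - F s ^ 2))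
    (hF' : ∀ t ∈ Icc (0:ℝ) T, F' t = -∫ s in t..T, (c * B' s ^ 2 - F' s ^ 2))
    {MB MB' d : ℝ}
    (hMB : ∀ t ∈ Icc (0:ℝ) T, |B t| ≤ MB) (hMB' : ∀ t ∈ Icc (0:ℝ) T, |B' t| ≤ MB')
    (hd : ∀ t ∈ Icc (0:ℝ) T, |B t - B' t| ≤ d) :
    ∀ t ∈ Icc (0:ℝ) T, |F t - F' t| ≤ c * T * (MB + MB') * d := by
  have h0T : (0:ℝ) ∈ Icc (0:ℝ) T := left_mem_Icc.2 hT.le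
  have hdnn : 0 ≤ d := (abs_nonneg _).trans (hd 0 h0T)
  have hMBnn : 0 ≤ MB := (abs_nonneg _).trans (hMB 0 h0T)
  have hMB'nn : 0 ≤ MB' := (abs_nonneg _).trans (hMB' 0 h0T)
  have hgc : ContinuousOn (fun s => c * B s ^ 2 - F s ^ 2) (Icc 0 T) :=
    (continuousOn_const.mul (hBc.pow 2)).sub (hFc.pow 2)
  have hg'c : ContinuousOn (fun s => c * B' s ^ 2 - F' s ^ 2) (Icc 0 T) :=
    (continuousOn_const.mul (hB'c.pow 2)).sub (hF'c.pow 2)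
  have hFd := hasDerivWithinAt_of_sol hgc hF
  have hF'd := hasDerivWithinAt_of_sol hg'c hF'
  have hSc : ContinuousOn (fun u => F u + F' u) (Icc 0 T) := hFc.add hF'c
  set W : ℝ → ℝ := fun u => Real.exp (∫ s in (0:ℝ)..u, (F s + F' s)) with hWdef
  have hWd := hasDerivWithinAt_expPrim hSc
  have hWc : ContinuousOn W (Icc 0 T) := fun t ht => (hWd t ht).continuousWithinAt
  have hWpos : ∀ u, 0 < W u := fun u => Real.exp_pos _
  have hSnp : ∀ t ∈ Icc (0:ℝ) T, F t + F' t ≤ 0 := fun t ht =>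
    add_nonpos (sol_nonpos hc hFc hBc hT.le hF t ht) (sol_nonpos hc hF'c hB'c hT.le hF' t ht)
  have hWanti : AntitoneOn W (Icc 0 T) :=
    antitoneOn_of_hasDeriv hWd
      (fun t ht => mul_nonpos_of_nonneg_of_nonpos (hWpos t).le (hSnp t ht))
  set ψ : ℝ → ℝ := fun u => (F u - F' u) * W u with hψdef
  set ψ' : ℝ → ℝ := fun s => c * (B s ^ 2 - B' s ^ 2) * W s with hψ'def
  have hψd : ∀ t ∈ Icc (0:ℝ) T, HasDerivWithinAt ψ (ψ' t) (Icc 0 T) t := by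
    intro t ht
    have := ((hFd t ht).sub (hF'd t ht)).mul (hWd t ht)
    convert this using 1
    show c * (B t ^ 2 - B' t ^ 2) * W t =
      (c * B t ^ 2 - F t ^ 2 - (c * B' t ^ 2 - F' t ^ 2)) * W t
        + (F t - F' t) * (W t * (F t + F' t))
    ring
    all_goals rfl
  have hψ'c : ContinuousOn ψ' (Icc 0 T) :=
    (continuousOn_const.mul ((hBc.pow 2).sub (hB'c.pow 2))).mul hWc
  have hFT : F T = 0 := by
    rw [hF T (right_mem_Icc.2 hT.le), intervalIntegral.integral_same, neg_zero]
  have hF'T : F' T = 0 := by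
    rw [hF' T (right_mem_Icc.2 hT.le), intervalIntegral.integral_same, neg_zero]
  intro t ht
  have hsub : Icc t T ⊆ Icc (0:ℝ) T := Icc_subset_Icc ht.1 le_rfl
  have hftc : ∫ s in t..T, ψ' s = ψ T - ψ t := by
    have hψc : ContinuousOn ψ (Icc 0 T) := fun u hu => (hψd u hu).continuousWithinAt
    refine intervalIntegral.integral_eq_sub_of_hasDeriv_right_of_le ht.2
      (hψc.mono hsub) (fun x hx => ?_) ?_
    · have hx' : x ∈ Ioo (0:ℝ) T := ⟨ht.1.trans_lt hx.1, hx.2⟩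
      exact (((hψd x (Ioo_subset_Icc_self hx')).hasDerivAt
        (Icc_mem_nhds hx'.1 hx'.2))).hasDerivWithinAt
    · exact (hψ'c.mono (by rw [uIcc_of_le ht.2]; exact hsub)).intervalIntegrable
  have hψT : ψ T = 0 := by simp [hψdef, hFT, hF'T]
  have hbound : ‖∫ s in t..T, ψ' s‖ ≤ (c * (MB + MB') * d * W t) * |T - t| := by
    refine intervalIntegral.norm_integral_le_of_norm_le_const (fun x hx => ?_)
    rw [uIoc_of_le ht.2] at hx
    have hxI : x ∈ Icc (0:ℝ) T := ⟨ht.1.trans hx.1.le, hx.2⟩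
    have hWx : W x ≤ W t := hWanti ht hxI hx.1.le
    have hBB : |B x ^ 2 - B' x ^ 2| ≤ (MB + MB') * d := by
      have : B x ^ 2 - B' x ^ 2 = (B x + B' x) * (B x - B' x) := by ring
      rw [this, abs_mul]
      exact mul_le_mul ((abs_add_le _ _).trans (add_le_add (hMB x hxI) (hMB' x hxI)))
        (hd x hxI) (abs_nonneg _) (by linarith)
    show |c * (B x ^ 2 - B' x ^ 2) * W x| ≤ c * (MB + MB') * d * W t
    rw [abs_mul, abs_mul, abs_of_nonneg hc, abs_of_pos (hWpos x)]
    calc c * |B x ^ 2 - B' x ^ 2| * W x ≤ c * ((MB + MB') * d) * W t :=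
          mul_le_mul (mul_le_mul_of_nonneg_left hBB hc) hWx (hWpos x).le (by positivity)
      _ = c * (MB + MB') * d * W t := by ring
  rw [hftc, hψT, zero_sub, norm_neg, hψdef] at hbound
  have : |(F t - F' t)| * W t ≤ c * (MB + MB') * d * W t * T := by
    have h1 : ‖(F t - F' t) * W t‖ = |F t - F' t| * W t := by
      rw [Real.norm_eq_abs, abs_mul, abs_of_pos (hWpos t)]
    rw [h1] at hbound
    refine hbound.trans ?_
    rw [abs_of_nonneg (by linarith [ht.2] : (0:ℝ) ≤ T - t)]
    have : T - t ≤ T := by linarith [ht.1]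
    nlinarith [hWpos t, mul_nonneg (mul_nonneg (mul_nonneg hc (by linarith : (0:ℝ) ≤ MB + MB')) hdnn) (hWpos t).le]
  nlinarith [hWpos t, this]
  -- goal: |F t - F' t| ≤ c * T * (MB+MB') * d



lemma le_supNorm {T : ℝ} {f : ℝ → ℝ} (hf : ContinuousOn f (Icc 0 T))
    {t : ℝ} (ht : t ∈ Icc (0:ℝ) T) : |f t| ≤ supNorm T f :=
  le_csSup (isCompact_Icc.bddAbove_image (continuous_abs.comp_continuousOn hf))
    ⟨t, ht, rfl⟩

lemma supNorm_le {T M : ℝ} (hT : 0 ≤ T) {f : ℝ → ℝ}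
    (h : ∀ t ∈ Icc (0:ℝ) T, |f t| ≤ M) : supNorm T f ≤ M :=
  csSup_le ((nonempty_Icc.2 hT).image _) (by rintro x ⟨t, ht, rfl⟩; exact h t ht)

lemma exp_sub_exp_abs_le {a b : ℝ} (ha : a ≤ 0) (hb : b ≤ 0) :
    |Real.exp a - Real.exp b| ≤ |a - b| := by
  wlog h : b ≤ a generalizing a b
  · rw [abs_sub_comm, abs_sub_comm a b]; exact this hb ha (le_of_not_ge h)
  have h1 : Real.exp a ≤ 1 := Real.exp_le_one_iff.2 ha
  have h2 : b - a + 1 ≤ Real.exp (b - a) := Real.add_one_le_exp _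
  have h3 : Real.exp b = Real.exp a * Real.exp (b - a) := by
    rw [← Real.exp_add]; ring_nf
  have h4 : (0:ℝ) < Real.exp a := Real.exp_pos _
  rw [abs_of_nonneg (sub_nonneg.2 (Real.exp_le_exp.2 h)), abs_of_nonneg (sub_nonneg.2 h)]
  nlinarith


/-- Stability of `E^{B̃}(t) = −(γ̂β/λ)∫ₜᵀ B̃(s) exp(∫ₜˢ F^{B̃}(r) dr) ds` with respect to `B̃`:
`‖E^{B̃} − E^{B̃′}‖_∞ ≤ (γ̂βT/λ)(1 + (γ̂T²/λ)‖B̃′‖_∞(‖B̃‖_∞ + ‖B̃′‖_∞))‖B̃ − B̃′‖_∞`. -/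
theorem E_stability
    (γhat lam β T : ℝ) (hγ : 0 < γhat) (hlam : 0 < lam) (hβ : 0 < β) (hT : 0 < T)
    (Btil Btil' : ℝ → ℝ)
    (hB : ContinuousOn Btil (Icc 0 T)) (hB' : ContinuousOn Btil' (Icc 0 T))
    (F F' : ℝ → ℝ)
    (hFcont : ContinuousOn F (Icc 0 T)) (hF'cont : ContinuousOn F' (Icc 0 T))
    (hFsol : ∀ t ∈ Icc (0:ℝ) T, F t = -∫ s in t..T, (γhat / lam * Btil s ^ 2 - F s ^ 2))
    (hF'sol : ∀ t ∈ Icc (0:ℝ) T, F' t = -∫ s in t..T, (γhat / lam * Btil' s ^ 2 - F' s ^ 2))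
    (E E' : ℝ → ℝ)
    (hE : E = fun t => -(γhat * β / lam) * ∫ s in t..T, Btil s * Real.exp (∫ r in t..s, F r))
    (hE' : E' = fun t => -(γhat * β / lam) *
      ∫ s in t..T, Btil' s * Real.exp (∫ r in t..s, F' r)) :
    supNorm T (fun t => E t - E' t) ≤
      γhat * β * T / lam *
        (1 + γhat * T ^ 2 / lam * supNorm T Btil' * (supNorm T Btil + supNorm T Btil')) *
        supNorm T (fun u => Btil u - Btil' u) := by
  subst hE hE'
  have h0T : (0:ℝ) ∈ Icc (0:ℝ) T := left_mem_Icc.2 hT.le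
  have hc : 0 ≤ γhat / lam := div_nonneg hγ.le hlam.le
  set MB := supNorm T Btil with hMBdef
  set MB' := supNorm T Btil' with hMB'def
  set d := supNorm T (fun u => Btil u - Btil' u) with hddef
  have hMB : ∀ t ∈ Icc (0:ℝ) T, |Btil t| ≤ MB := fun t ht => le_supNorm hB ht
  have hMB' : ∀ t ∈ Icc (0:ℝ) T, |Btil' t| ≤ MB' := fun t ht => le_supNorm hB' ht
  have hdd : ∀ t ∈ Icc (0:ℝ) T, |Btil t - Btil' t| ≤ d := fun t ht =>
    le_supNorm (hB.sub hB') ht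
  have hdnn : 0 ≤ d := (abs_nonneg _).trans (hdd 0 h0T)
  have hMBnn : 0 ≤ MB := (abs_nonneg _).trans (hMB 0 h0T)
  have hMB'nn : 0 ≤ MB' := (abs_nonneg _).trans (hMB' 0 h0T)
  have hK := sol_diff_bound hT hc hFcont hF'cont hB hB' hFsol hF'sol hMB hMB' hdd
  set K : ℝ := γhat / lam * T * (MB + MB') * d with hKdef
  have hKnn : 0 ≤ K := by positivity
  have hFnp := sol_nonpos hc hFcont hB hT.le hFsol
  have hF'np := sol_nonpos hc hF'cont hB' hT.le hF'sol
  have hFint : ∀ a b, a ∈ Icc (0:ℝ) T → b ∈ Icc (0:ℝ) T → IntervalIntegrable F volume a b :=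
    fun a b ha hb => (hFcont.mono (uIcc_subset_Icc ha hb)).intervalIntegrable
  have hF'int : ∀ a b, a ∈ Icc (0:ℝ) T → b ∈ Icc (0:ℝ) T → IntervalIntegrable F' volume a b :=
    fun a b ha hb => (hF'cont.mono (uIcc_subset_Icc ha hb)).intervalIntegrable
  set P : ℝ → ℝ := fun s => ∫ r in (0:ℝ)..s, F r with hPdef
  set P' : ℝ → ℝ := fun s => ∫ r in (0:ℝ)..s, F' r with hP'def
  have hPc : ContinuousOn P (Icc 0 T) := fun s hs =>
    (hasDerivWithinAt_primitive' hFcont s hs).continuousWithinAt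
  have hP'c : ContinuousOn P' (Icc 0 T) := fun s hs =>
    (hasDerivWithinAt_primitive' hF'cont s hs).continuousWithinAt
  have hIeq : ∀ t ∈ Icc (0:ℝ) T, ∀ s ∈ Icc (0:ℝ) T, (∫ r in t..s, F r) = P s - P t := by
    intro t ht s hs
    rw [eq_sub_iff_add_eq, hPdef]
    simp only
    rw [add_comm]
    exact intervalIntegral.integral_add_adjacent_intervals (hFint 0 t h0T ht) (hFint t s ht hs)
  have hI'eq : ∀ t ∈ Icc (0:ℝ) T, ∀ s ∈ Icc (0:ℝ) T, (∫ r in t..s, F' r) = P' s - P' t := by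
    intro t ht s hs
    rw [eq_sub_iff_add_eq, hP'def]
    simp only
    rw [add_comm]
    exact intervalIntegral.integral_add_adjacent_intervals (hF'int 0 t h0T ht) (hF'int t s ht hs)
  -- nonpositivity of exponents
  have hInp : ∀ t ∈ Icc (0:ℝ) T, ∀ s ∈ Icc (0:ℝ) T, t ≤ s → P s - P t ≤ 0 := by
    intro t ht s hs hts
    rw [← hIeq t ht s hs]
    have h := intervalIntegral.integral_nonneg (μ := volume) (f := fun r => -F r) hts
      (fun u hu => neg_nonneg.2 (hFnp u ⟨ht.1.trans hu.1, hu.2.trans hs.2⟩))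
    rw [intervalIntegral.integral_neg] at h
    linarith
  have hI'np : ∀ t ∈ Icc (0:ℝ) T, ∀ s ∈ Icc (0:ℝ) T, t ≤ s → P' s - P' t ≤ 0 := by
    intro t ht s hs hts
    rw [← hI'eq t ht s hs]
    have h := intervalIntegral.integral_nonneg (μ := volume) (f := fun r => -F' r) hts
      (fun u hu => neg_nonneg.2 (hF'np u ⟨ht.1.trans hu.1, hu.2.trans hs.2⟩))
    rw [intervalIntegral.integral_neg] at h
    linarith
  have key : ∀ t ∈ Icc (0:ℝ) T, |(fun t => -(γhat * β / lam) *
        ∫ s in t..T, Btil s * Real.exp (∫ r in t..s, F r)) t -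
      (fun t => -(γhat * β / lam) * ∫ s in t..T, Btil' s * Real.exp (∫ r in t..s, F' r)) t|
      ≤ γhat * β * T / lam * (1 + γhat * T ^ 2 / lam * MB' * (MB + MB')) * d := by
    intro t ht
    simp only
    have hsub : Icc t T ⊆ Icc (0:ℝ) T := Icc_subset_Icc ht.1 le_rfl
    have huIcc : uIcc t T = Icc t T := uIcc_of_le ht.2
    have hXeq : (∫ s in t..T, Btil s * Real.exp (∫ r in t..s, F r))
        = ∫ s in t..T, Btil s * Real.exp (P s - P t) := by
      refine intervalIntegral.integral_congr fun s hs => ?_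
      rw [huIcc] at hs
      rw [hIeq t ht s (hsub hs)]
    have hX'eq : (∫ s in t..T, Btil' s * Real.exp (∫ r in t..s, F' r))
        = ∫ s in t..T, Btil' s * Real.exp (P' s - P' t) := by
      refine intervalIntegral.integral_congr fun s hs => ?_
      rw [huIcc] at hs
      rw [hI'eq t ht s (hsub hs)]
    have hXc : ContinuousOn (fun s => Btil s * Real.exp (P s - P t)) (Icc 0 T) :=
      hB.mul (Real.continuous_exp.comp_continuousOn (hPc.sub continuousOn_const))
    have hX'c : ContinuousOn (fun s => Btil' s * Real.exp (P' s - P' t)) (Icc 0 T) :=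
      hB'.mul (Real.continuous_exp.comp_continuousOn (hP'c.sub continuousOn_const))
    have hXint : IntervalIntegrable (fun s => Btil s * Real.exp (P s - P t)) volume t T :=
      (hXc.mono (uIcc_subset_Icc ht (right_mem_Icc.2 hT.le))).intervalIntegrable
    have hX'int : IntervalIntegrable (fun s => Btil' s * Real.exp (P' s - P' t)) volume t T :=
      (hX'c.mono (uIcc_subset_Icc ht (right_mem_Icc.2 hT.le))).intervalIntegrable
    rw [hXeq, hX'eq]
    have hcomb : -(γhat * β / lam) * (∫ s in t..T, Btil s * Real.exp (P s - P t)) -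
        -(γhat * β / lam) * (∫ s in t..T, Btil' s * Real.exp (P' s - P' t))
        = -(γhat * β / lam) * ∫ s in t..T,
            (Btil s * Real.exp (P s - P t) - Btil' s * Real.exp (P' s - P' t)) := by
      rw [intervalIntegral.integral_sub hXint hX'int]; ring
    rw [hcomb, abs_mul, abs_neg, abs_of_nonneg (by positivity : (0:ℝ) ≤ γhat * β / lam)]
    have hC : ‖∫ s in t..T,
        (Btil s * Real.exp (P s - P t) - Btil' s * Real.exp (P' s - P' t))‖
        ≤ (d + MB' * (K * T)) * |T - t| := by
      refine intervalIntegral.norm_integral_le_of_norm_le_const fun s hs => ?_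
      rw [uIoc_of_le ht.2] at hs
      have hsI : s ∈ Icc (0:ℝ) T := ⟨ht.1.trans hs.1.le, hs.2⟩
      have hts : t ≤ s := hs.1.le
      have ha : P s - P t ≤ 0 := hInp t ht s hsI hts
      have hb : P' s - P' t ≤ 0 := hI'np t ht s hsI hts
      have habs : |(P s - P t) - (P' s - P' t)| ≤ K * T := by
        have heq2 : (P s - P t) - (P' s - P' t) = ∫ r in t..s, (F r - F' r) := by
          rw [intervalIntegral.integral_sub (hFint t s ht hsI) (hF'int t s ht hsI),
            hIeq t ht s hsI, hI'eq t ht s hsI]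
        rw [heq2]
        have h3 : ‖∫ r in t..s, (F r - F' r)‖ ≤ K * |s - t| := by
          refine intervalIntegral.norm_integral_le_of_norm_le_const fun r hr => ?_
          rw [uIoc_of_le hts] at hr
          exact hK r ⟨ht.1.trans hr.1.le, hr.2.trans hsI.2⟩
        rw [Real.norm_eq_abs] at h3
        refine h3.trans ?_
        rw [abs_of_nonneg (by linarith : (0:ℝ) ≤ s - t)]
        have : s - t ≤ T := by
          have := hsI.2; have := ht.1; linarith
        exact mul_le_mul_of_nonneg_left this hKnn
      have hdecomp : Btil s * Real.exp (P s - P t) - Btil' s * Real.exp (P' s - P' t)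
          = (Btil s - Btil' s) * Real.exp (P s - P t) +
            Btil' s * (Real.exp (P s - P t) - Real.exp (P' s - P' t)) := by ring
      rw [Real.norm_eq_abs, hdecomp]
      have hea : Real.exp (P s - P t) ≤ 1 := Real.exp_le_one_iff.2 ha
      calc |(Btil s - Btil' s) * Real.exp (P s - P t) +
            Btil' s * (Real.exp (P s - P t) - Real.exp (P' s - P' t))|
          ≤ |Btil s - Btil' s| * Real.exp (P s - P t) +
            |Btil' s| * |Real.exp (P s - P t) - Real.exp (P' s - P' t)| := by
            refine (abs_add_le _ _).trans ?_
            rw [abs_mul, abs_mul, abs_of_pos (Real.exp_pos _)]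
        _ ≤ d * 1 + MB' * (K * T) := by
            refine add_le_add ?_ ?_
            · exact mul_le_mul (hdd s hsI) hea (Real.exp_pos _).le hdnn
            · exact mul_le_mul (hMB' s hsI) ((exp_sub_exp_abs_le ha hb).trans habs)
                (abs_nonneg _) hMB'nn
        _ = d + MB' * (K * T) := by ring
    refine le_trans (mul_le_mul_of_nonneg_left hC (by positivity)) ?_
    have h1 : |T - t| ≤ T := by
      rw [abs_of_nonneg (by linarith [ht.2] : (0:ℝ) ≤ T - t)]
      linarith [ht.1]
    have h2 : γhat * β / lam * ((d + MB' * (K * T)) * |T - t|)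
        ≤ γhat * β / lam * ((d + MB' * (K * T)) * T) := by
      apply mul_le_mul_of_nonneg_left _ (by positivity)
      exact mul_le_mul_of_nonneg_left h1 (by positivity)
    refine h2.trans (le_of_eq ?_)
    rw [hKdef]
    field_simp
  exact supNorm_le hT.le key
end
end

section
/- Let γ̂, λ > 0, ε ∈ ℝ, T > 0, and let B̃, B̃′ : [0, T] → ℝ be continuous bounded functions. Let C^{B̃}(t) = −(ε/2) ∫ₜᵀ B̃(s)² exp(∫ₜˢ F^{B̃}(r) dr) ds and similarly for C^{B̃′}. Then ‖C^{B̃} − C^{B̃′}‖_∞ ≤ (|ε| T/2) ( 1 + (γ̂ T²/λ) ‖B̃′‖_∞² ) ( ‖B̃‖_∞ + ‖B̃′‖_∞ ) ‖B̃ − B̃′‖_∞. -/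
open Set

/- Auxiliary lemmas -/

lemma aux_exp_sub_exp_abs_le {x y : ℝ} (hx : x ≤ 0) (hy : y ≤ 0) :
    |Real.exp x - Real.exp y| ≤ |x - y| := by
  wlog hxy : x ≤ y generalizing x y
  · rw [abs_sub_comm, abs_sub_comm x y]; exact this hy hx (le_of_not_ge hxy)
  have h1 : Real.exp y ≤ 1 := Real.exp_le_one_iff.mpr hy
  have h2 : (x - y) + 1 ≤ Real.exp (x - y) := Real.add_one_le_exp _
  have h3 : Real.exp x = Real.exp y * Real.exp (x - y) := by
    rw [← Real.exp_add]; ring_nf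
  have h4 : Real.exp x ≤ Real.exp y := Real.exp_le_exp.mpr hxy
  rw [abs_of_nonpos (by linarith), abs_of_nonpos (by linarith)]
  nlinarith [Real.exp_pos y]

lemma aux_abs_le_supNorm {T : ℝ} {f : ℝ → ℝ} (hf : ContinuousOn f (Icc 0 T))
    {t : ℝ} (ht : t ∈ Icc 0 T) : |f t| ≤ supNorm T f :=
  le_csSup (IsCompact.bddAbove_image isCompact_Icc hf.abs) (mem_image_of_mem _ ht)

lemma aux_supNorm_nonneg {T : ℝ} (hT : 0 ≤ T) {f : ℝ → ℝ} (hf : ContinuousOn f (Icc 0 T)) :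
    0 ≤ supNorm T f :=
  le_trans (abs_nonneg (f 0)) (aux_abs_le_supNorm hf (left_mem_Icc.mpr hT))

lemma aux_supNorm_le {T c : ℝ} (hT : 0 ≤ T) (f : ℝ → ℝ) (h : ∀ t ∈ Icc 0 T, |f t| ≤ c) :
    supNorm T f ≤ c := by
  apply csSup_le ((nonempty_Icc.mpr hT).image _)
  rintro x ⟨t, ht, rfl⟩
  exact h t ht

lemma aux_cont_primitive {f : ℝ → ℝ} (hf : Continuous f) (a : ℝ) :
    Continuous fun s => ∫ r in a..s, f r :=
  continuous_iff_continuousAt.mpr fun x =>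
    ((hf.integral_hasStrictDerivAt a x).hasDerivAt).continuousAt

lemma aux_abs_intervalIntegral_le {f : ℝ → ℝ} {a b M : ℝ} (hab : a ≤ b)
    (hf : ContinuousOn f (Icc a b)) (h : ∀ u ∈ Icc a b, |f u| ≤ M) :
    |∫ u in a..b, f u| ≤ (b - a) * M := by
  have hint : IntervalIntegrable f MeasureTheory.volume a b := by
    apply ContinuousOn.intervalIntegrable
    rwa [uIcc_of_le hab]
  have hint2 : IntervalIntegrable (fun u => |f u|) MeasureTheory.volume a b := by
    apply ContinuousOn.intervalIntegrable
    rw [uIcc_of_le hab]; exact hf.abs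
  calc |∫ u in a..b, f u| ≤ ∫ u in a..b, |f u| :=
        intervalIntegral.abs_integral_le_integral_abs hab
    _ ≤ ∫ _u in a..b, M :=
        intervalIntegral.integral_mono_on hab hint2 intervalIntegrable_const h
    _ = (b - a) * M := by simp [smul_eq_mul]

/-- Extension of a function on `[0, T]` to a function on `ℝ` by clamping. -/
noncomputable def auxExt (T : ℝ) (hT : 0 ≤ T) (f : ℝ → ℝ) : ℝ → ℝ :=
  IccExtend hT ((Icc 0 T).restrict f)

lemma auxExt_eq {T : ℝ} (hT : 0 ≤ T) (f : ℝ → ℝ) {x : ℝ} (hx : x ∈ Icc 0 T) :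
    auxExt T hT f x = f x := IccExtend_of_mem hT _ hx

lemma auxExt_continuous {T : ℝ} (hT : 0 ≤ T) {f : ℝ → ℝ}
    (hf : ContinuousOn f (Icc 0 T)) : Continuous (auxExt T hT f) :=
  hf.restrict.Icc_extend'

lemma auxExt_integral_congr {T : ℝ} (hT : 0 ≤ T) (f : ℝ → ℝ) {u v : ℝ}
    (hu : u ∈ Icc 0 T) (hv : v ∈ Icc 0 T) :
    ∫ s in u..v, auxExt T hT f s = ∫ s in u..v, f s :=
  intervalIntegral.integral_congr fun x hx => auxExt_eq hT f (uIcc_subset_Icc hu hv hx)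

/-- Representation lemma: if `H t = -∫ₜᵀ (h s - a s * H s) ds` on `[0, T]`, then
`H t = -∫ₜᵀ h s exp(∫ₜˢ a) ds`. -/
lemma aux_rep {T : ℝ} (hT0 : (0:ℝ) ≤ T) {h a H : ℝ → ℝ}
    (hh : Continuous h) (ha : Continuous a) (hHc : Continuous H)
    (hH : ∀ t ∈ Icc (0:ℝ) T, H t = -∫ s in t..T, (h s - a s * H s)) :
    ∀ t ∈ Icc (0:ℝ) T, H t = -∫ s in t..T, h s * Real.exp (∫ r in t..s, a r) := by
  set φ : ℝ → ℝ := fun s => h s - a s * H s with hφdef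
  have hφ : Continuous φ := hh.sub (ha.mul hHc)
  set A : ℝ → ℝ := fun s => ∫ r in (0:ℝ)..s, a r with hAdef
  have hA : ∀ x, HasDerivAt A (a x) x := fun x =>
    (ha.integral_hasStrictDerivAt 0 x).hasDerivAt
  have hAc : Continuous A := aux_cont_primitive ha 0
  set W : ℝ → ℝ := fun s => H s * Real.exp (A s) with hWdef
  set w : ℝ → ℝ := fun s => h s * Real.exp (A s) with hwdef
  have hwc : Continuous w := hh.mul (Real.continuous_exp.comp hAc)
  have hWc : Continuous W := hHc.mul (Real.continuous_exp.comp hAc)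
  -- derivative of H on the interior
  have hHd : ∀ x ∈ Ioo (0:ℝ) T, HasDerivAt H (φ x) x := by
    intro x hx
    have hGd : HasDerivAt (fun t => (∫ s in (0:ℝ)..t, φ s) - ∫ s in (0:ℝ)..T, φ s) (φ x) x :=
      ((hφ.integral_hasStrictDerivAt 0 x).hasDerivAt).sub_const _
    apply hGd.congr_of_eventuallyEq
    filter_upwards [isOpen_Ioo.mem_nhds hx] with y hy
    have hyI : y ∈ Icc (0:ℝ) T := Ioo_subset_Icc_self hy
    have hsub := intervalIntegral.integral_interval_sub_left
      (hφ.intervalIntegrable (μ := MeasureTheory.volume) 0 T) (hφ.intervalIntegrable (μ := MeasureTheory.volume) 0 y)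
    have := hH y hyI
    rw [this]
    linarith [hsub]
  -- derivative of W on the interior
  have hWd : ∀ x ∈ Ioo (0:ℝ) T, HasDerivAt W (w x) x := by
    intro x hx
    have hexp : HasDerivAt (fun s => Real.exp (A s)) (Real.exp (A x) * a x) x :=
      (hA x).exp
    have this : HasDerivAt (fun s => H s * Real.exp (A s))
        (φ x * Real.exp (A x) + H x * (Real.exp (A x) * a x)) x := (hHd x hx).mul hexp
    convert this using 1
    simp only [hwdef, hφdef]
    ring
  -- FTC on [t, T]
  have key : ∀ t ∈ Icc (0:ℝ) T, ∫ s in t..T, w s = W T - W t := by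
    intro t ht
    apply intervalIntegral.integral_eq_sub_of_hasDeriv_right_of_le ht.2
      (hWc.continuousOn)
    · intro x hx
      exact (hWd x ⟨lt_of_le_of_lt ht.1 hx.1, hx.2⟩).hasDerivWithinAt
    · exact hwc.intervalIntegrable t T
  have hHT : H T = 0 := by
    have := hH T ⟨hT0, le_rfl⟩
    simpa using this
  intro t ht
  have hkey := key t ht
  have hWT : W T = 0 := by simp [hWdef, hHT]
  rw [hWT] at hkey
  -- hkey : ∫ s in t..T, w s = -W t = -(H t * exp (A t))
  have hexpt : Real.exp (A t) ≠ 0 := (Real.exp_pos _).ne'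
  have hrhs : (∫ s in t..T, h s * Real.exp (∫ r in t..s, a r))
      = (∫ s in t..T, w s) * (Real.exp (A t))⁻¹ := by
    rw [← intervalIntegral.integral_mul_const]
    apply intervalIntegral.integral_congr
    intro s _
    simp only [hwdef, hAdef]
    have hsub := intervalIntegral.integral_interval_sub_left
      (ha.intervalIntegrable (μ := MeasureTheory.volume) 0 s) (ha.intervalIntegrable (μ := MeasureTheory.volume) 0 t)
    rw [← hsub, Real.exp_sub]
    field_simp
  rw [hrhs, hkey]
  field_simp [hWdef]
  simp [hWdef]

/-- Stability of `C^{B̃}(t) = −(ε/2)∫ₜᵀ B̃(s)² exp(∫ₜˢ F^{B̃}(r) dr) ds` with respect to `B̃`: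
`‖C^{B̃} − C^{B̃′}‖_∞ ≤ (|ε|T/2)(1 + (γ̂T²/λ)‖B̃′‖_∞²)(‖B̃‖_∞ + ‖B̃′‖_∞)‖B̃ − B̃′‖_∞`. -/
theorem C_stability
    (γhat lam ε T : ℝ) (hγ : 0 < γhat) (hlam : 0 < lam) (hT : 0 < T)
    (Btil Btil' : ℝ → ℝ)
    (hB : ContinuousOn Btil (Icc 0 T)) (hB' : ContinuousOn Btil' (Icc 0 T))
    (F F' : ℝ → ℝ)
    (hFcont : ContinuousOn F (Icc 0 T)) (hF'cont : ContinuousOn F' (Icc 0 T))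
    (hFsol : ∀ t ∈ Icc (0:ℝ) T, F t = -∫ s in t..T, (γhat / lam * Btil s ^ 2 - F s ^ 2))
    (hF'sol : ∀ t ∈ Icc (0:ℝ) T, F' t = -∫ s in t..T, (γhat / lam * Btil' s ^ 2 - F' s ^ 2))
    (C C' : ℝ → ℝ)
    (hC : C = fun t => -(ε / 2) * ∫ s in t..T, Btil s ^ 2 * Real.exp (∫ r in t..s, F r))
    (hC' : C' = fun t => -(ε / 2) * ∫ s in t..T, Btil' s ^ 2 * Real.exp (∫ r in t..s, F' r)) :
    supNorm T (fun t => C t - C' t) ≤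
      |ε| * T / 2 * (1 + γhat * T ^ 2 / lam * supNorm T Btil' ^ 2) *
        (supNorm T Btil + supNorm T Btil') * supNorm T (fun u => Btil u - Btil' u) := by
  have hT0 : (0:ℝ) ≤ T := hT.le
  have hTmem : T ∈ Icc (0:ℝ) T := right_mem_Icc.mpr hT0
  set MB := supNorm T Btil with hMB
  set MB' := supNorm T Btil' with hMB'
  set MD := supNorm T (fun u => Btil u - Btil' u) with hMD
  have hBD : ContinuousOn (fun u => Btil u - Btil' u) (Icc 0 T) := hB.sub hB'
  have hMBnn : 0 ≤ MB := aux_supNorm_nonneg hT0 hB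
  have hMB'nn : 0 ≤ MB' := aux_supNorm_nonneg hT0 hB'
  have hMDnn : 0 ≤ MD := aux_supNorm_nonneg hT0 hBD
  have hgl : 0 ≤ γhat / lam := (div_pos hγ hlam).le
  set Be := auxExt T hT0 Btil with hBe
  set Be' := auxExt T hT0 Btil' with hBe'
  set Fe := auxExt T hT0 F with hFe
  set Fe' := auxExt T hT0 F' with hFe'
  have hBec : Continuous Be := auxExt_continuous hT0 hB
  have hBe'c : Continuous Be' := auxExt_continuous hT0 hB'
  have hFec : Continuous Fe := auxExt_continuous hT0 hFcont
  have hFe'c : Continuous Fe' := auxExt_continuous hT0 hF'cont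
  have hBeq : ∀ x ∈ Icc (0:ℝ) T, Be x = Btil x := fun x hx => auxExt_eq hT0 Btil hx
  have hB'eq : ∀ x ∈ Icc (0:ℝ) T, Be' x = Btil' x := fun x hx => auxExt_eq hT0 Btil' hx
  have hFeq : ∀ x ∈ Icc (0:ℝ) T, Fe x = F x := fun x hx => auxExt_eq hT0 F hx
  have hF'eq : ∀ x ∈ Icc (0:ℝ) T, Fe' x = F' x := fun x hx => auxExt_eq hT0 F' hx
  have hFint : ∀ {u v : ℝ}, u ∈ Icc (0:ℝ) T → v ∈ Icc (0:ℝ) T →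
      (∫ s in u..v, Fe s) = ∫ s in u..v, F s := fun hu hv => auxExt_integral_congr hT0 F hu hv
  have hF'int : ∀ {u v : ℝ}, u ∈ Icc (0:ℝ) T → v ∈ Icc (0:ℝ) T →
      (∫ s in u..v, Fe' s) = ∫ s in u..v, F' s := fun hu hv => auxExt_integral_congr hT0 F' hu hv
  -- pointwise supNorm bounds
  have hBbd : ∀ u ∈ Icc (0:ℝ) T, |Btil u| ≤ MB := fun u hu => aux_abs_le_supNorm hB hu
  have hB'bd : ∀ u ∈ Icc (0:ℝ) T, |Btil' u| ≤ MB' := fun u hu => aux_abs_le_supNorm hB' hu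
  have hDbd : ∀ u ∈ Icc (0:ℝ) T, |Btil u - Btil' u| ≤ MD := fun u hu =>
    aux_abs_le_supNorm hBD hu
  have habsdiff : ∀ u ∈ Icc (0:ℝ) T, |Btil u ^ 2 - Btil' u ^ 2| ≤ (MB + MB') * MD := by
    intro u hu
    have h2 : Btil u ^ 2 - Btil' u ^ 2 = (Btil u + Btil' u) * (Btil u - Btil' u) := by ring
    rw [h2, abs_mul]
    apply mul_le_mul _ (hDbd u hu) (abs_nonneg _) (add_nonneg hMBnn hMB'nn)
    exact le_trans (abs_add_le _ _) (add_le_add (hBbd u hu) (hB'bd u hu))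
  -- transferred integral equations and representation for F
  have hFesol : ∀ t ∈ Icc (0:ℝ) T, Fe t =
      -∫ s in t..T, (γhat / lam * Be s ^ 2 - Fe s * Fe s) := by
    intro t ht
    rw [hFeq t ht, hFsol t ht, neg_inj]
    apply intervalIntegral.integral_congr
    intro x hx
    have hxI : x ∈ Icc (0:ℝ) T := uIcc_subset_Icc ht hTmem hx
    simp only [hBeq x hxI, hFeq x hxI]
    ring
  have hFe'sol : ∀ t ∈ Icc (0:ℝ) T, Fe' t =
      -∫ s in t..T, (γhat / lam * Be' s ^ 2 - Fe' s * Fe' s) := by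
    intro t ht
    rw [hF'eq t ht, hF'sol t ht, neg_inj]
    apply intervalIntegral.integral_congr
    intro x hx
    have hxI : x ∈ Icc (0:ℝ) T := uIcc_subset_Icc ht hTmem hx
    simp only [hB'eq x hxI, hF'eq x hxI]
    ring
  have repF : ∀ t ∈ Icc (0:ℝ) T, Fe t =
      -∫ s in t..T, γhat / lam * Be s ^ 2 * Real.exp (∫ r in t..s, Fe r) :=
    aux_rep hT0 (h := fun s => γhat / lam * Be s ^ 2) (a := Fe) (H := Fe)
      (continuous_const.mul (hBec.pow 2)) hFec hFec hFesol
  have repF' : ∀ t ∈ Icc (0:ℝ) T, Fe' t =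
      -∫ s in t..T, γhat / lam * Be' s ^ 2 * Real.exp (∫ r in t..s, Fe' r) :=
    aux_rep hT0 (h := fun s => γhat / lam * Be' s ^ 2) (a := Fe') (H := Fe')
      (continuous_const.mul (hBe'c.pow 2)) hFe'c hFe'c hFe'sol
  have hFneg : ∀ t ∈ Icc (0:ℝ) T, F t ≤ 0 := by
    intro t ht
    have h1 := repF t ht
    rw [hFeq t ht] at h1
    rw [h1, neg_nonpos]
    apply intervalIntegral.integral_nonneg ht.2
    intro u _
    exact mul_nonneg (mul_nonneg hgl (sq_nonneg _)) (Real.exp_pos _).le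
  have hF'neg : ∀ t ∈ Icc (0:ℝ) T, F' t ≤ 0 := by
    intro t ht
    have h1 := repF' t ht
    rw [hF'eq t ht] at h1
    rw [h1, neg_nonpos]
    apply intervalIntegral.integral_nonneg ht.2
    intro u _
    exact mul_nonneg (mul_nonneg hgl (sq_nonneg _)) (Real.exp_pos _).le
  -- integral equation for the difference
  have hGsol : ∀ t ∈ Icc (0:ℝ) T, Fe t - Fe' t =
      -∫ s in t..T, (γhat / lam * (Be s ^ 2 - Be' s ^ 2) - (Fe s + Fe' s) * (Fe s - Fe' s)) := by
    intro t ht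
    have hsubI : Icc t T ⊆ Icc (0:ℝ) T := Icc_subset_Icc ht.1 le_rfl
    have hi1 : IntervalIntegrable (fun s => γhat / lam * Btil s ^ 2 - F s ^ 2)
        MeasureTheory.volume t T := by
      apply ContinuousOn.intervalIntegrable
      rw [uIcc_of_le ht.2]
      exact ((continuousOn_const.mul (hB.pow 2)).sub (hFcont.pow 2)).mono hsubI
    have hi2 : IntervalIntegrable (fun s => γhat / lam * Btil' s ^ 2 - F' s ^ 2)
        MeasureTheory.volume t T := by
      apply ContinuousOn.intervalIntegrable
      rw [uIcc_of_le ht.2]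
      exact ((continuousOn_const.mul (hB'.pow 2)).sub (hF'cont.pow 2)).mono hsubI
    calc Fe t - Fe' t = F t - F' t := by rw [hFeq t ht, hF'eq t ht]
      _ = -((∫ s in t..T, (γhat / lam * Btil s ^ 2 - F s ^ 2)) -
            ∫ s in t..T, (γhat / lam * Btil' s ^ 2 - F' s ^ 2)) := by
          rw [hFsol t ht, hF'sol t ht]; ring
      _ = -∫ s in t..T, ((γhat / lam * Btil s ^ 2 - F s ^ 2) -
            (γhat / lam * Btil' s ^ 2 - F' s ^ 2)) := by
          rw [intervalIntegral.integral_sub hi1 hi2]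
      _ = -∫ s in t..T, (γhat / lam * (Be s ^ 2 - Be' s ^ 2) -
            (Fe s + Fe' s) * (Fe s - Fe' s)) := by
          rw [neg_inj]
          apply intervalIntegral.integral_congr
          intro x hx
          have hxI : x ∈ Icc (0:ℝ) T := uIcc_subset_Icc ht hTmem hx
          simp only [hBeq x hxI, hB'eq x hxI, hFeq x hxI, hF'eq x hxI]
          ring
  have repG : ∀ t ∈ Icc (0:ℝ) T, Fe t - Fe' t =
      -∫ s in t..T, γhat / lam * (Be s ^ 2 - Be' s ^ 2) *
        Real.exp (∫ r in t..s, (Fe r + Fe' r)) :=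
    aux_rep hT0 (h := fun s => γhat / lam * (Be s ^ 2 - Be' s ^ 2))
      (a := fun s => Fe s + Fe' s) (H := fun s => Fe s - Fe' s)
      (continuous_const.mul ((hBec.pow 2).sub (hBe'c.pow 2))) (hFec.add hFe'c)
      (hFec.sub hFe'c) hGsol
  -- bound on F - F'
  have hGbound : ∀ t ∈ Icc (0:ℝ) T, |F t - F' t| ≤ γhat / lam * T * ((MB + MB') * MD) := by
    intro t ht
    have h1 := repG t ht
    rw [hFeq t ht, hF'eq t ht] at h1
    rw [h1, abs_neg]
    have hcont : ContinuousOn (fun s => γhat / lam * (Be s ^ 2 - Be' s ^ 2) *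
        Real.exp (∫ r in t..s, (Fe r + Fe' r))) (Icc t T) :=
      ((continuous_const.mul ((hBec.pow 2).sub (hBe'c.pow 2))).mul
        (Real.continuous_exp.comp (aux_cont_primitive (hFec.add hFe'c) t))).continuousOn
    have hbd : ∀ u ∈ Icc t T, |γhat / lam * (Be u ^ 2 - Be' u ^ 2) *
        Real.exp (∫ r in t..u, (Fe r + Fe' r))| ≤ γhat / lam * ((MB + MB') * MD) := by
      intro u hu
      have huI : u ∈ Icc (0:ℝ) T := ⟨le_trans ht.1 hu.1, hu.2⟩
      have he1 : Real.exp (∫ r in t..u, (Fe r + Fe' r)) ≤ 1 := by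
        rw [Real.exp_le_one_iff]
        have hle : (∫ r in t..u, (Fe r + Fe' r)) ≤ ∫ _r in t..u, (0:ℝ) := by
          apply intervalIntegral.integral_mono_on hu.1
            ((hFec.add hFe'c).intervalIntegrable _ _) intervalIntegrable_const
          intro r hr
          have hrI : r ∈ Icc (0:ℝ) T := ⟨le_trans ht.1 hr.1, le_trans hr.2 hu.2⟩
          have hv1 := hFneg r hrI
          have hv2 := hF'neg r hrI
          rw [Pi.add_apply, hFeq r hrI, hF'eq r hrI]
          linarith
        simpa using hle
      rw [abs_mul, abs_mul, abs_of_nonneg hgl, abs_of_pos (Real.exp_pos _),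
        hBeq u huI, hB'eq u huI]
      have h5 : |Btil u ^ 2 - Btil' u ^ 2| * Real.exp (∫ r in t..u, (Fe r + Fe' r)) ≤
          ((MB + MB') * MD) * 1 :=
        mul_le_mul (habsdiff u huI) he1 (Real.exp_pos _).le
          (mul_nonneg (add_nonneg hMBnn hMB'nn) hMDnn)
      calc γhat / lam * |Btil u ^ 2 - Btil' u ^ 2| * Real.exp (∫ r in t..u, (Fe r + Fe' r))
          = γhat / lam * (|Btil u ^ 2 - Btil' u ^ 2| *
            Real.exp (∫ r in t..u, (Fe r + Fe' r))) := by ring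
        _ ≤ γhat / lam * (((MB + MB') * MD) * 1) := mul_le_mul_of_nonneg_left h5 hgl
        _ = γhat / lam * ((MB + MB') * MD) := by ring
    calc |∫ s in t..T, γhat / lam * (Be s ^ 2 - Be' s ^ 2) *
          Real.exp (∫ r in t..s, (Fe r + Fe' r))|
        ≤ (T - t) * (γhat / lam * ((MB + MB') * MD)) :=
          aux_abs_intervalIntegral_le ht.2 hcont hbd
      _ ≤ T * (γhat / lam * ((MB + MB') * MD)) := by
          apply mul_le_mul_of_nonneg_right (by linarith [ht.1])
          exact mul_nonneg hgl (mul_nonneg (add_nonneg hMBnn hMB'nn) hMDnn)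
      _ = γhat / lam * T * ((MB + MB') * MD) := by ring
  -- final bound
  subst hC hC'
  apply aux_supNorm_le hT0
  intro t ht
  simp only
  set K0 : ℝ := (1 + γhat * T ^ 2 / lam * MB' ^ 2) * ((MB + MB') * MD) with hK0
  have hK0nn : 0 ≤ K0 := by
    apply mul_nonneg
    · have : 0 ≤ γhat * T ^ 2 / lam * MB' ^ 2 := by positivity
      linarith
    · exact mul_nonneg (add_nonneg hMBnn hMB'nn) hMDnn
  set f1 : ℝ → ℝ := fun s => Be s ^ 2 * Real.exp (∫ r in t..s, Fe r) with hf1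
  set f2 : ℝ → ℝ := fun s => Be' s ^ 2 * Real.exp (∫ r in t..s, Fe' r) with hf2
  have hf1c : Continuous f1 :=
    (hBec.pow 2).mul (Real.continuous_exp.comp (aux_cont_primitive hFec t))
  have hf2c : Continuous f2 :=
    (hBe'c.pow 2).mul (Real.continuous_exp.comp (aux_cont_primitive hFe'c t))
  have hI1 : (∫ s in t..T, Btil s ^ 2 * Real.exp (∫ r in t..s, F r)) = ∫ s in t..T, f1 s := by
    apply intervalIntegral.integral_congr
    intro x hx
    have hxI : x ∈ Icc (0:ℝ) T := uIcc_subset_Icc ht hTmem hx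
    simp only [hf1, hBeq x hxI, hFint ht hxI]
  have hI2 : (∫ s in t..T, Btil' s ^ 2 * Real.exp (∫ r in t..s, F' r)) = ∫ s in t..T, f2 s := by
    apply intervalIntegral.integral_congr
    intro x hx
    have hxI : x ∈ Icc (0:ℝ) T := uIcc_subset_Icc ht hTmem hx
    simp only [hf2, hB'eq x hxI, hF'int ht hxI]
  rw [hI1, hI2]
  have hcomb : -(ε / 2) * (∫ s in t..T, f1 s) - -(ε / 2) * (∫ s in t..T, f2 s)
      = -(ε / 2) * ∫ s in t..T, (f1 s - f2 s) := by
    rw [intervalIntegral.integral_sub (hf1c.intervalIntegrable _ _)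
      (hf2c.intervalIntegrable _ _)]
    ring
  rw [hcomb, abs_mul]
  have hptwise : ∀ u ∈ Icc t T, |f1 u - f2 u| ≤ K0 := by
    intro u hu
    have huI : u ∈ Icc (0:ℝ) T := ⟨le_trans ht.1 hu.1, hu.2⟩
    have hEneg : (∫ r in t..u, Fe r) ≤ 0 := by
      have hle : (∫ r in t..u, Fe r) ≤ ∫ _r in t..u, (0:ℝ) := by
        apply intervalIntegral.integral_mono_on hu.1 (hFec.intervalIntegrable _ _)
          intervalIntegrable_const
        intro r hr
        have hrI : r ∈ Icc (0:ℝ) T := ⟨le_trans ht.1 hr.1, le_trans hr.2 hu.2⟩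
        rw [hFeq r hrI]
        exact hFneg r hrI
      simpa using hle
    have hE'neg : (∫ r in t..u, Fe' r) ≤ 0 := by
      have hle : (∫ r in t..u, Fe' r) ≤ ∫ _r in t..u, (0:ℝ) := by
        apply intervalIntegral.integral_mono_on hu.1 (hFe'c.intervalIntegrable _ _)
          intervalIntegrable_const
        intro r hr
        have hrI : r ∈ Icc (0:ℝ) T := ⟨le_trans ht.1 hr.1, le_trans hr.2 hu.2⟩
        rw [hF'eq r hrI]
        exact hF'neg r hrI
      simpa using hle
    have hexpE : Real.exp (∫ r in t..u, Fe r) ≤ 1 := Real.exp_le_one_iff.mpr hEneg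
    have hdecomp : f1 u - f2 u = (Be u ^ 2 - Be' u ^ 2) * Real.exp (∫ r in t..u, Fe r) +
        Be' u ^ 2 * (Real.exp (∫ r in t..u, Fe r) - Real.exp (∫ r in t..u, Fe' r)) := by
      simp only [hf1, hf2]
      ring
    have hBe'sq : Be' u ^ 2 ≤ MB' ^ 2 := by
      rw [hB'eq u huI, ← sq_abs]
      exact pow_le_pow_left₀ (abs_nonneg _) (hB'bd u huI) 2
    have hEE' : |Real.exp (∫ r in t..u, Fe r) - Real.exp (∫ r in t..u, Fe' r)| ≤
        γhat * T ^ 2 / lam * ((MB + MB') * MD) := by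
      apply le_trans (aux_exp_sub_exp_abs_le hEneg hE'neg)
      have hsubint : (∫ r in t..u, Fe r) - (∫ r in t..u, Fe' r)
          = ∫ r in t..u, (Fe r - Fe' r) := by
        rw [intervalIntegral.integral_sub (hFec.intervalIntegrable _ _)
          (hFe'c.intervalIntegrable _ _)]
      rw [hsubint]
      have hGb : ∀ r ∈ Icc t u, |Fe r - Fe' r| ≤ γhat / lam * T * ((MB + MB') * MD) := by
        intro r hr
        have hrI : r ∈ Icc (0:ℝ) T := ⟨le_trans ht.1 hr.1, le_trans hr.2 hu.2⟩
        rw [hFeq r hrI, hF'eq r hrI]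
        exact hGbound r hrI
      calc |∫ r in t..u, (Fe r - Fe' r)| ≤ (u - t) * (γhat / lam * T * ((MB + MB') * MD)) :=
            aux_abs_intervalIntegral_le hu.1 (hFec.sub hFe'c).continuousOn hGb
        _ ≤ T * (γhat / lam * T * ((MB + MB') * MD)) := by
            apply mul_le_mul_of_nonneg_right (by linarith [ht.1, huI.2])
            exact mul_nonneg (mul_nonneg hgl hT0)
              (mul_nonneg (add_nonneg hMBnn hMB'nn) hMDnn)
        _ = γhat * T ^ 2 / lam * ((MB + MB') * MD) := by field_simp
    have h6 : |(Be u ^ 2 - Be' u ^ 2) * Real.exp (∫ r in t..u, Fe r)| ≤ (MB + MB') * MD := by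
      rw [abs_mul, abs_of_pos (Real.exp_pos _), hBeq u huI, hB'eq u huI]
      calc |Btil u ^ 2 - Btil' u ^ 2| * Real.exp (∫ r in t..u, Fe r) ≤ ((MB + MB') * MD) * 1 :=
            mul_le_mul (habsdiff u huI) hexpE (Real.exp_pos _).le
              (mul_nonneg (add_nonneg hMBnn hMB'nn) hMDnn)
        _ = (MB + MB') * MD := mul_one _
    have h7 : |Be' u ^ 2 * (Real.exp (∫ r in t..u, Fe r) - Real.exp (∫ r in t..u, Fe' r))| ≤
        MB' ^ 2 * (γhat * T ^ 2 / lam * ((MB + MB') * MD)) := by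
      rw [abs_mul, abs_of_nonneg (sq_nonneg (Be' u))]
      exact mul_le_mul hBe'sq hEE' (abs_nonneg _) (sq_nonneg _)
    calc |f1 u - f2 u| ≤ |(Be u ^ 2 - Be' u ^ 2) * Real.exp (∫ r in t..u, Fe r)| +
          |Be' u ^ 2 * (Real.exp (∫ r in t..u, Fe r) - Real.exp (∫ r in t..u, Fe' r))| := by
          rw [hdecomp]; exact abs_add_le _ _
      _ ≤ (MB + MB') * MD + MB' ^ 2 * (γhat * T ^ 2 / lam * ((MB + MB') * MD)) :=
          add_le_add h6 h7
      _ = K0 := by rw [hK0]; ring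
  have hintbd : |∫ s in t..T, (f1 s - f2 s)| ≤ (T - t) * K0 :=
    aux_abs_intervalIntegral_le ht.2 (hf1c.sub hf2c).continuousOn hptwise
  have hε2 : |-(ε / 2)| = |ε| / 2 := by
    rw [abs_neg, abs_div]
    norm_num
  rw [hε2]
  calc |ε| / 2 * |∫ s in t..T, (f1 s - f2 s)| ≤ |ε| / 2 * ((T - t) * K0) :=
        mul_le_mul_of_nonneg_left hintbd (by positivity)
    _ ≤ |ε| / 2 * (T * K0) := by
        apply mul_le_mul_of_nonneg_left _ (by positivity)
        exact mul_le_mul_of_nonneg_right (by linarith [ht.1]) hK0nn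
    _ = |ε| * T / 2 * (1 + γhat * T ^ 2 / lam * MB' ^ 2) * (MB + MB') * MD := by
        rw [hK0]; ring
end

section
/- Let γ̂, λ > 0, β > 0, a > 0, ε ∈ ℝ, T > 0, and let B̃ : [0, T] → ℝ be continuous and bounded. Define Φ(B̃)(t) = a − ∫ₜᵀ ( ε β B̃(s) − E^{B̃}(s) C^{B̃}(s) ) ds. Then ‖Φ(B̃)‖_∞ ≤ a + |ε| β T ‖B̃‖_∞ + (|ε| γ̂ β / (2λ)) T³ ‖B̃‖_∞³. Moreover, if R = (3/2)a, |ε| satisfies a + |ε| β R T + |ε| β γ̂ R³ T³ / (2λ) ≤ R, and ‖B̃‖_∞ ≤ R, then ‖Φ(B̃)‖_∞ ≤ R. -/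
open Set

private lemma F_nonpos_aux (γhat lam T : ℝ) (hγ : 0 < γhat) (hlam : 0 < lam) (hT : 0 < T)
    (Btil F : ℝ → ℝ) (hB : ContinuousOn Btil (Icc 0 T))
    (hFcont : ContinuousOn F (Icc 0 T))
    (hFsol : ∀ t ∈ Icc (0:ℝ) T, F t = -∫ s in t..T, (γhat / lam * Btil s ^ 2 - F s ^ 2)) :
    ∀ t ∈ Icc (0:ℝ) T, F t ≤ 0 := by
  set proj : ℝ → ℝ := fun t => max 0 (min t T) with hproj
  have hprojmem : ∀ t, proj t ∈ Icc (0:ℝ) T := fun t =>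
    ⟨le_max_left _ _, max_le hT.le (min_le_right _ _)⟩
  have hprojeq : ∀ t ∈ Icc (0:ℝ) T, proj t = t := by
    intro t ht
    simp [hproj, min_eq_left ht.2, max_eq_right ht.1]
  have hprojc : Continuous proj := by fun_prop
  set Fc : ℝ → ℝ := fun t => F (proj t) with hFcdef
  have hFcc : Continuous Fc := hFcont.comp_continuous hprojc hprojmem
  have hFceq : ∀ t ∈ Icc (0:ℝ) T, Fc t = F t := fun t ht => by
    rw [hFcdef]; simp only [hprojeq t ht]
  set g : ℝ → ℝ := fun s => γhat / lam * Btil s ^ 2 - F s ^ 2 with hg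
  have hgc : ContinuousOn g (Icc 0 T) :=
    (continuousOn_const.mul (hB.pow 2)).sub (hFcont.pow 2)
  have hgint : ∀ u v, u ∈ Icc (0:ℝ) T → v ∈ Icc (0:ℝ) T →
      IntervalIntegrable g MeasureTheory.volume u v := fun u v hu hv =>
    (hgc.mono (uIcc_subset_Icc hu hv)).intervalIntegrable
  have hTmem : T ∈ Icc (0:ℝ) T := ⟨hT.le, le_refl T⟩
  have hFT : F T = 0 := by
    have := hFsol T hTmem
    simpa using this
  by_contra hcon
  push_neg at hcon
  obtain ⟨t₀, ht₀, hpos⟩ := hcon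
  set S : Set ℝ := Icc t₀ T ∩ Fc ⁻¹' Iic 0 with hS
  have hSclosed : IsClosed S := isClosed_Icc.inter (isClosed_Iic.preimage hFcc)
  have hTS : T ∈ S := by
    refine ⟨⟨ht₀.2, le_refl T⟩, ?_⟩
    simp only [mem_preimage, mem_Iic, hFceq T hTmem, hFT, le_refl]
  have hbdd : BddBelow S := ⟨t₀, fun x hx => hx.1.1⟩
  set t₁ : ℝ := sInf S with ht₁def
  have ht₁mem : t₁ ∈ S := hSclosed.csInf_mem ⟨T, hTS⟩ hbdd
  have ht₁Icc : t₁ ∈ Icc (0:ℝ) T := ⟨le_trans ht₀.1 ht₁mem.1.1, ht₁mem.1.2⟩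
  have hFt₁le : F t₁ ≤ 0 := by rw [← hFceq t₁ ht₁Icc]; exact ht₁mem.2
  have ht₀t₁ : t₀ < t₁ := by
    rcases lt_or_eq_of_le (le_csInf ⟨T, hTS⟩ (fun x hx => hx.1.1)) with h | h
    · exact h
    · exact absurd hpos (by rw [h]; linarith)
  have hsub : Icc t₀ t₁ ⊆ Icc (0:ℝ) T := Icc_subset_Icc ht₀.1 ht₁mem.1.2
  have hFpos : ∀ t ∈ Ico t₀ t₁, 0 < F t := by
    intro t ht
    by_contra h
    push_neg at h
    have htIcc : t ∈ Icc (0:ℝ) T := hsub ⟨ht.1, ht.2.le⟩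
    have htS : t ∈ S := ⟨⟨ht.1, le_trans ht.2.le ht₁mem.1.2⟩, by
      simp only [mem_preimage, mem_Iic, hFceq t htIcc]; exact h⟩
    exact absurd (csInf_le hbdd htS) (not_le.mpr ht.2)
  have hFt₁0 : F t₁ = 0 := by
    refine le_antisymm hFt₁le ?_
    have hclos : t₁ ∈ closure (Ico t₀ t₁) := by
      rw [closure_Ico ht₀t₁.ne]
      exact ⟨ht₀t₁.le, le_refl _⟩
    have hne : (nhdsWithin t₁ (Ico t₀ t₁)).NeBot :=
      mem_closure_iff_nhdsWithin_neBot.mp hclos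
    have htend : Filter.Tendsto F (nhdsWithin t₁ (Ico t₀ t₁)) (nhds (F t₁)) :=
      ((hFcont t₁ ht₁Icc).mono (fun x hx => hsub ⟨hx.1, hx.2.le⟩))
    exact ge_of_tendsto htend (eventually_mem_nhdsWithin.mono fun t ht => (hFpos t ht).le)
  have hFnonneg : ∀ t ∈ Icc t₀ t₁, 0 ≤ F t := by
    intro t ht
    rcases eq_or_lt_of_le ht.2 with h | h
    · rw [h, hFt₁0]
    · exact (hFpos t ⟨ht.1, h⟩).le
  obtain ⟨K, hK⟩ := isCompact_Icc.exists_bound_of_continuousOn hFcont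
  have hK0 : 0 ≤ K := le_trans (norm_nonneg _) (hK T hTmem)
  set G : ℝ → ℝ := fun t => ∫ s in t..t₁, Fc s with hGdef
  have key : ∀ t ∈ Icc t₀ t₁, F t ≤ K * G t := by
    intro t ht
    have htIcc : t ∈ Icc (0:ℝ) T := hsub ht
    have h1 : F t = -∫ s in t..t₁, g s := by
      have e1 := hFsol t htIcc
      have e2 := hFsol t₁ ht₁Icc
      have hadd : (∫ s in t..t₁, g s) + (∫ s in t₁..T, g s) = ∫ s in t..T, g s :=
        intervalIntegral.integral_add_adjacent_intervals (hgint t t₁ htIcc ht₁Icc)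
          (hgint t₁ T ht₁Icc hTmem)
      have e2' : (∫ s in t₁..T, g s) = 0 := by
        have : F t₁ = -∫ s in t₁..T, g s := e2
        rw [hFt₁0] at this
        linarith
      rw [e1, ← hadd, e2']
      ring
    have hcont1 : ContinuousOn (fun s => F s ^ 2 - γhat / lam * Btil s ^ 2) (Icc 0 T) :=
      (hFcont.pow 2).sub (continuousOn_const.mul (hB.pow 2))
    have hint1 : IntervalIntegrable (fun s => F s ^ 2 - γhat / lam * Btil s ^ 2)
        MeasureTheory.volume t t₁ :=
      (hcont1.mono (uIcc_subset_Icc htIcc ht₁Icc)).intervalIntegrable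
    have hint2 : IntervalIntegrable (fun s => K * Fc s) MeasureTheory.volume t t₁ :=
      (continuous_const.mul hFcc).intervalIntegrable _ _
    have h2 : (-∫ s in t..t₁, g s) = ∫ s in t..t₁, (F s ^ 2 - γhat / lam * Btil s ^ 2) := by
      rw [← intervalIntegral.integral_neg]
      apply intervalIntegral.integral_congr
      intro x _
      simp only [hg]
      ring
    have h3 : (∫ s in t..t₁, (F s ^ 2 - γhat / lam * Btil s ^ 2)) ≤ ∫ s in t..t₁, K * Fc s := by
      apply intervalIntegral.integral_mono_on ht.2 hint1 hint2
      intro x hx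
      have hx' : x ∈ Icc t₀ t₁ := ⟨le_trans ht.1 hx.1, hx.2⟩
      have hxIcc : x ∈ Icc (0:ℝ) T := hsub hx'
      have h0F := hFnonneg x hx'
      have hFK : F x ≤ K := le_trans (le_abs_self _) (hK x hxIcc)
      have hBsq : 0 ≤ γhat / lam * Btil x ^ 2 := by positivity
      rw [hFceq x hxIcc]
      nlinarith
    have h4 : (∫ s in t..t₁, K * Fc s) = K * G t := by
      rw [hGdef]
      exact intervalIntegral.integral_const_mul K Fc
    linarith [h1 ▸ (h2 ▸ h3), h4 ▸ h3]
  have hGderiv : ∀ t : ℝ, HasDerivAt G (-Fc t) t := by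
    intro t
    exact intervalIntegral.integral_hasDerivAt_left (hFcc.intervalIntegrable _ _)
      (hFcc.stronglyMeasurableAtFilter _ _) hFcc.continuousAt
  set φ : ℝ → ℝ := fun t => G t * Real.exp (K * t) with hφdef
  have hφderiv : ∀ t : ℝ,
      HasDerivAt φ ((-Fc t) * Real.exp (K * t) + G t * (Real.exp (K * t) * K)) t := by
    intro t
    have hexp : HasDerivAt (fun t => Real.exp (K * t)) (Real.exp (K * t) * K) t := by
      simpa using (((hasDerivAt_id t).const_mul K).exp)
    exact (hGderiv t).mul hexp
  have hmono : MonotoneOn φ (Icc t₀ t₁) := by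
    apply monotoneOn_of_deriv_nonneg (convex_Icc _ _)
    · exact fun t _ => (hφderiv t).differentiableAt.continuousAt.continuousWithinAt
    · intro t _
      exact (hφderiv t).differentiableAt.differentiableWithinAt
    · intro t ht
      rw [interior_Icc] at ht
      rw [(hφderiv t).deriv]
      have hkey := key t ⟨ht.1.le, ht.2.le⟩
      have hfceq := hFceq t (hsub ⟨ht.1.le, ht.2.le⟩)
      have hexp := Real.exp_pos (K * t)
      nlinarith [hfceq ▸ hkey]
  have hφt₁ : φ t₁ = 0 := by
    simp [hφdef, hGdef, intervalIntegral.integral_same]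
  have hGt₀ : 0 ≤ G t₀ := by
    apply intervalIntegral.integral_nonneg ht₀t₁.le
    intro u hu
    rw [hFceq u (hsub hu)]
    exact hFnonneg u hu
  have hle : φ t₀ ≤ 0 := by
    have := hmono (left_mem_Icc.mpr ht₀t₁.le) (right_mem_Icc.mpr ht₀t₁.le) ht₀t₁.le
    linarith [hφt₁]
  have hGt₀0 : G t₀ ≤ 0 := by
    have hexp := Real.exp_pos (K * t₀)
    by_contra h
    push_neg at h
    have : 0 < φ t₀ := by
      rw [hφdef]
      positivity
    linarith
  have hG0 : G t₀ = 0 := le_antisymm hGt₀0 hGt₀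
  have := key t₀ (left_mem_Icc.mpr ht₀t₁.le)
  rw [hG0] at this
  simp at this
  linarith

/-- A priori estimate for the Picard map `Φ(B̃)(t) = a − ∫ₜᵀ (εβ B̃(s) − E^{B̃}(s)C^{B̃}(s)) ds`:
`‖Φ(B̃)‖_∞ ≤ a + |ε|βT‖B̃‖_∞ + (|ε|γ̂β/(2λ))T³‖B̃‖_∞³`; moreover, if `R = (3/2)a`,
`a + |ε|βRT + |ε|βγ̂R³T³/(2λ) ≤ R`, and `‖B̃‖_∞ ≤ R`, then `‖Φ(B̃)‖_∞ ≤ R`. -/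
theorem Phi_a_priori_bound
    (γhat lam β a ε T : ℝ)
    (hγ : 0 < γhat) (hlam : 0 < lam) (hβ : 0 < β) (ha : 0 < a) (hT : 0 < T)
    (Btil : ℝ → ℝ) (hB : ContinuousOn Btil (Icc 0 T))
    (F : ℝ → ℝ) (hFcont : ContinuousOn F (Icc 0 T))
    (hFsol : ∀ t ∈ Icc (0:ℝ) T, F t = -∫ s in t..T, (γhat / lam * Btil s ^ 2 - F s ^ 2))
    (E C Phi : ℝ → ℝ)
    (hE : E = fun t => -(γhat * β / lam) * ∫ s in t..T, Btil s * Real.exp (∫ r in t..s, F r))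
    (hC : C = fun t => -(ε / 2) * ∫ s in t..T, Btil s ^ 2 * Real.exp (∫ r in t..s, F r))
    (hPhi : Phi = fun t => a - ∫ s in t..T, (ε * β * Btil s - E s * C s)) :
    supNorm T Phi ≤
      a + |ε| * β * T * supNorm T Btil +
        |ε| * γhat * β / (2 * lam) * T ^ 3 * supNorm T Btil ^ 3 ∧
    (∀ R : ℝ, R = 3 / 2 * a →
      a + |ε| * β * R * T + |ε| * β * γhat * R ^ 3 * T ^ 3 / (2 * lam) ≤ R →
      supNorm T Btil ≤ R → supNorm T Phi ≤ R) := by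
  set M : ℝ := supNorm T Btil with hMdef
  have hbddB : BddAbove ((fun t => |Btil t|) '' Icc 0 T) :=
    isCompact_Icc.bddAbove_image hB.abs
  have hMle : ∀ s ∈ Icc (0:ℝ) T, |Btil s| ≤ M := fun s hs =>
    le_csSup hbddB ⟨s, hs, rfl⟩
  have hM0 : 0 ≤ M := le_trans (abs_nonneg _) (hMle 0 ⟨le_refl _, hT.le⟩)
  have hF0 : ∀ t ∈ Icc (0:ℝ) T, F t ≤ 0 :=
    F_nonpos_aux γhat lam T hγ hlam hT Btil F hB hFcont hFsol
  -- exponential factor bound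
  have hexple : ∀ s ∈ Icc (0:ℝ) T, ∀ x ∈ Ioc s T, Real.exp (∫ r in s..x, F r) ≤ 1 := by
    intro s hs x hx
    rw [Real.exp_le_one_iff]
    have hxIcc : x ∈ Icc (0:ℝ) T := ⟨le_trans hs.1 hx.1.le, hx.2⟩
    have : 0 ≤ ∫ r in s..x, -F r := by
      apply intervalIntegral.integral_nonneg hx.1.le
      intro u hu
      have : u ∈ Icc (0:ℝ) T := ⟨le_trans hs.1 hu.1, le_trans hu.2 hx.2⟩
      linarith [hF0 u this]
    rw [intervalIntegral.integral_neg] at this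
    linarith
  have hEbound : ∀ s ∈ Icc (0:ℝ) T, |E s| ≤ γhat * β / lam * M * T := by
    intro s hs
    rw [hE]
    simp only
    rw [abs_mul, abs_neg, abs_of_pos (show (0:ℝ) < γhat * β / lam by positivity)]
    have hnorm : ‖∫ x in s..T, Btil x * Real.exp (∫ r in s..x, F r)‖ ≤ M * |T - s| := by
      apply intervalIntegral.norm_integral_le_of_norm_le_const
      intro x hx
      rw [uIoc_of_le hs.2] at hx
      have hxIcc : x ∈ Icc (0:ℝ) T := ⟨le_trans hs.1 hx.1.le, hx.2⟩
      rw [Real.norm_eq_abs, abs_mul, abs_of_pos (Real.exp_pos _)]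
      calc |Btil x| * Real.exp (∫ r in s..x, F r) ≤ M * 1 :=
            mul_le_mul (hMle x hxIcc) (hexple s hs x hx) (Real.exp_pos _).le hM0
        _ = M := mul_one M
    rw [Real.norm_eq_abs] at hnorm
    have habs : |T - s| ≤ T := by
      rw [abs_of_nonneg (by linarith [hs.2])]
      linarith [hs.1]
    calc γhat * β / lam * |∫ x in s..T, Btil x * Real.exp (∫ r in s..x, F r)|
        ≤ γhat * β / lam * (M * |T - s|) := by
          apply mul_le_mul_of_nonneg_left hnorm (by positivity)
      _ ≤ γhat * β / lam * (M * T) := by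
          apply mul_le_mul_of_nonneg_left (mul_le_mul_of_nonneg_left habs hM0) (by positivity)
      _ = γhat * β / lam * M * T := by ring
  have hCbound : ∀ s ∈ Icc (0:ℝ) T, |C s| ≤ |ε| / 2 * M ^ 2 * T := by
    intro s hs
    rw [hC]
    simp only
    rw [abs_mul, abs_neg, abs_div]
    have h2 : |(2:ℝ)| = 2 := by norm_num
    rw [h2]
    have hnorm : ‖∫ x in s..T, Btil x ^ 2 * Real.exp (∫ r in s..x, F r)‖ ≤ M ^ 2 * |T - s| := by
      apply intervalIntegral.norm_integral_le_of_norm_le_const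
      intro x hx
      rw [uIoc_of_le hs.2] at hx
      have hxIcc : x ∈ Icc (0:ℝ) T := ⟨le_trans hs.1 hx.1.le, hx.2⟩
      rw [Real.norm_eq_abs, abs_mul, abs_of_pos (Real.exp_pos _)]
      have hB2 : |Btil x ^ 2| ≤ M ^ 2 := by
        rw [abs_pow]
        exact pow_le_pow_left₀ (abs_nonneg _) (hMle x hxIcc) 2
      calc |Btil x ^ 2| * Real.exp (∫ r in s..x, F r) ≤ M ^ 2 * 1 :=
            mul_le_mul hB2 (hexple s hs x hx) (Real.exp_pos _).le (by positivity)
        _ = M ^ 2 := mul_one _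
    rw [Real.norm_eq_abs] at hnorm
    have habs : |T - s| ≤ T := by
      rw [abs_of_nonneg (by linarith [hs.2])]
      linarith [hs.1]
    calc |ε| / 2 * |∫ x in s..T, Btil x ^ 2 * Real.exp (∫ r in s..x, F r)|
        ≤ |ε| / 2 * (M ^ 2 * |T - s|) := by
          apply mul_le_mul_of_nonneg_left hnorm (by positivity)
      _ ≤ |ε| / 2 * (M ^ 2 * T) := by
          apply mul_le_mul_of_nonneg_left (mul_le_mul_of_nonneg_left habs (by positivity))
            (by positivity)
      _ = |ε| / 2 * M ^ 2 * T := by ring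
  set C₀ : ℝ := |ε| * β * M + (γhat * β / lam * M * T) * (|ε| / 2 * M ^ 2 * T) with hC₀def
  clear_value C₀
  have hC₀0 : 0 ≤ C₀ := by rw [hC₀def]; positivity
  have hPhibound : ∀ t ∈ Icc (0:ℝ) T, |Phi t| ≤
      a + |ε| * β * T * M + |ε| * γhat * β / (2 * lam) * T ^ 3 * M ^ 3 := by
    intro t ht
    rw [hPhi]
    simp only
    have hnorm : ‖∫ s in t..T, (ε * β * Btil s - E s * C s)‖ ≤ C₀ * |T - t| := by
      apply intervalIntegral.norm_integral_le_of_norm_le_const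
      intro x hx
      rw [uIoc_of_le ht.2] at hx
      have hxIcc : x ∈ Icc (0:ℝ) T := ⟨le_trans ht.1 hx.1.le, hx.2⟩
      rw [Real.norm_eq_abs]
      calc |ε * β * Btil x - E x * C x| ≤ |ε * β * Btil x| + |E x * C x| := abs_sub _ _
        _ ≤ |ε| * β * M + (γhat * β / lam * M * T) * (|ε| / 2 * M ^ 2 * T) := by
            apply add_le_add
            · rw [abs_mul, abs_mul, abs_of_pos hβ]
              exact mul_le_mul_of_nonneg_left (hMle x hxIcc) (by positivity)
            · rw [abs_mul]
              exact mul_le_mul (hEbound x hxIcc) (hCbound x hxIcc) (abs_nonneg _)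
                (by positivity)
        _ = C₀ := hC₀def.symm
    rw [Real.norm_eq_abs] at hnorm
    have habs : |T - t| ≤ T := by
      rw [abs_of_nonneg (by linarith [ht.2])]
      linarith [ht.1]
    have h1 : |a - ∫ s in t..T, (ε * β * Btil s - E s * C s)| ≤
        a + |∫ s in t..T, (ε * β * Btil s - E s * C s)| := by
      calc |a - ∫ s in t..T, (ε * β * Btil s - E s * C s)| ≤
          |a| + |∫ s in t..T, (ε * β * Btil s - E s * C s)| := abs_sub _ _
        _ = a + |∫ s in t..T, (ε * β * Btil s - E s * C s)| := by rw [abs_of_pos ha]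
    have h2 : C₀ * |T - t| ≤ C₀ * T := mul_le_mul_of_nonneg_left habs hC₀0
    have h3 : a + C₀ * T = a + |ε| * β * T * M + |ε| * γhat * β / (2 * lam) * T ^ 3 * M ^ 3 := by
      rw [hC₀def]
      field_simp
      ring
    linarith
  constructor
  · apply Real.sSup_le
    · rintro x ⟨t, ht, rfl⟩
      exact hPhibound t ht
    · positivity
  · intro R hR hcond hMR
    have hsup1 : supNorm T Phi ≤
        a + |ε| * β * T * M + |ε| * γhat * β / (2 * lam) * T ^ 3 * M ^ 3 := by
      apply Real.sSup_le
      · rintro x ⟨t, ht, rfl⟩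
        exact hPhibound t ht
      · positivity
    have hM3 : M ^ 3 ≤ R ^ 3 := pow_le_pow_left₀ hM0 hMR 3
    have e1 : |ε| * β * T * M ≤ |ε| * β * R * T := by
      have := mul_le_mul_of_nonneg_left hMR (show (0:ℝ) ≤ |ε| * β * T by positivity)
      linarith [this]
    have e2 : |ε| * γhat * β / (2 * lam) * T ^ 3 * M ^ 3 ≤
        |ε| * β * γhat * R ^ 3 * T ^ 3 / (2 * lam) := by
      have h := mul_le_mul_of_nonneg_left hM3
        (show (0:ℝ) ≤ |ε| * γhat * β / (2 * lam) * T ^ 3 by positivity)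
      have heq : |ε| * γhat * β / (2 * lam) * T ^ 3 * R ^ 3 =
          |ε| * β * γhat * R ^ 3 * T ^ 3 / (2 * lam) := by ring
      linarith [heq ▸ h]
    linarith
end

section
/- Let γ̂, λ > 0, β > 0, a > 0, ε ∈ ℝ, T > 0, R > 0, and let B̃, B̃′ : [0, T] → ℝ be continuous functions with ‖B̃‖_∞ ≤ R and ‖B̃′‖_∞ ≤ R. Define Φ(B̃)(t) = a − ∫ₜᵀ ( ε β B̃(s) − E^{B̃}(s) C^{B̃}(s) ) ds and similarly Φ(B̃′). Then ‖Φ(B̃) − Φ(B̃′)‖_∞ ≤ T ( |ε| β + 2 |ε| β (γ̂ R² T² / λ) ( 1 + γ̂ R² T² / λ ) ) ‖B̃ − B̃′‖_∞. -/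
open Set

open Set MeasureTheory
open scoped Interval

namespace PhiAux


lemma intOn {T : ℝ} {f : ℝ → ℝ} (hf : ContinuousOn f (Icc 0 T)) {t s : ℝ}
    (ht : t ∈ Icc (0:ℝ) T) (hs : s ∈ Icc (0:ℝ) T) : IntervalIntegrable f volume t s :=
  (hf.mono (uIcc_subset_Icc ht hs)).intervalIntegrable

lemma int_nonpos {a b : ℝ} {f : ℝ → ℝ} (hab : a ≤ b) (hf : ∀ u ∈ Icc a b, f u ≤ 0) :
    (∫ u in a..b, f u) ≤ 0 := by
  have h := intervalIntegral.integral_nonneg (f := fun u => -f u) (μ := volume) hab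
    (fun u hu => neg_nonneg.2 (hf u hu))
  rw [intervalIntegral.integral_neg] at h
  linarith

lemma exp_lip {x y : ℝ} (hx : x ≤ 0) (hy : y ≤ 0) : |Real.exp x - Real.exp y| ≤ |x - y| := by
  wlog h : y ≤ x generalizing x y
  · rw [abs_sub_comm, abs_sub_comm x y]; exact this hy hx (le_of_not_ge h)
  have h1 : Real.exp y ≤ Real.exp x := Real.exp_le_exp.2 h
  have h2 : Real.exp x ≤ 1 := Real.exp_le_one_iff.2 hx
  have h3 := Real.add_one_le_exp (y - x)
  have h4 : Real.exp y = Real.exp (y - x) * Real.exp x := by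
    rw [← Real.exp_add]; ring_nf
  rw [abs_of_nonneg (by linarith), abs_of_nonneg (sub_nonneg.2 h)]
  nlinarith [Real.exp_pos x]

lemma hasDerivAt_int_right {T : ℝ} {f : ℝ → ℝ} (hf : ContinuousOn f (Icc 0 T)) {t : ℝ}
    (ht : t ∈ Ioo (0:ℝ) T) : HasDerivAt (fun u => ∫ s in u..T, f s) (-f t) t := by
  have hTm : T ∈ Icc (0:ℝ) T := right_mem_Icc.2 (ht.1.trans ht.2).le
  have h1 : HasDerivAt (fun u => ∫ s in T..u, f s) (f t) t :=
    intervalIntegral.integral_hasDerivAt_right (intOn hf hTm (Ioo_subset_Icc_self ht))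
      ((hf.mono Ioo_subset_Icc_self).stronglyMeasurableAtFilter isOpen_Ioo t ht)
      (hf.continuousAt (Icc_mem_nhds ht.1 ht.2))
  have heq : (fun u => ∫ s in u..T, f s) = fun u => -∫ s in T..u, f s := by
    funext u; rw [intervalIntegral.integral_symm]
  rw [heq]; exact h1.neg

lemma cont_primitive_right {T : ℝ} (hT : 0 ≤ T) {f : ℝ → ℝ} (hf : ContinuousOn f (Icc 0 T)) :
    ContinuousOn (fun u => ∫ s in u..T, f s) (Icc 0 T) := by
  rw [← uIcc_of_le hT]
  exact intervalIntegral.continuousOn_primitive_interval_left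
    (by rw [uIcc_of_le hT]; exact hf.integrableOn_Icc)


/-- Derivative of a solution of the integral equation at interior points. -/
lemma hasDerivAt_sol {T : ℝ} {g F : ℝ → ℝ} (hg : ContinuousOn g (Icc 0 T))
    (hsol : ∀ t ∈ Icc (0:ℝ) T, F t = -∫ s in t..T, g s) {t : ℝ} (ht : t ∈ Ioo (0:ℝ) T) :
    HasDerivAt F (g t) t := by
  have h1 : HasDerivAt (fun u => -∫ s in u..T, g s) (g t) t := by
    simpa using (hasDerivAt_int_right hg ht).fun_neg
  apply h1.congr_of_eventuallyEq
  filter_upwards [Icc_mem_nhds ht.1 ht.2] with x hx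
  exact hsol x hx


lemma F_nonpos {T c : ℝ} (hT : 0 < T) (hc : 0 ≤ c) {B F : ℝ → ℝ}
    (hB : ContinuousOn B (Icc 0 T)) (hF : ContinuousOn F (Icc 0 T))
    (hsol : ∀ t ∈ Icc (0:ℝ) T, F t = -∫ s in t..T, (c * B s ^ 2 - F s ^ 2)) :
    ∀ t ∈ Icc (0:ℝ) T, F t ≤ 0 := by
  have hTm : T ∈ Icc (0:ℝ) T := right_mem_Icc.2 hT.le
  set g : ℝ → ℝ := fun s => c * B s ^ 2 - F s ^ 2 with hgdef
  have hg : ContinuousOn g (Icc 0 T) := (continuousOn_const.mul (hB.pow 2)).sub (hF.pow 2)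
  set ψ : ℝ → ℝ := fun u => ∫ s in u..T, F s with hψdef
  have hψc : ContinuousOn ψ (Icc 0 T) := cont_primitive_right hT.le hF
  set u : ℝ → ℝ := fun s => F s * Real.exp (-ψ s) with hudef
  have huc : ContinuousOn u (Icc 0 T) :=
    hF.mul (Real.continuous_exp.comp_continuousOn hψc.neg)
  have hud : ∀ x ∈ Ioo (0:ℝ) T,
      HasDerivAt u (c * B x ^ 2 * Real.exp (-ψ x)) x := by
    intro x hx
    have h1 : HasDerivAt F (g x) x := hasDerivAt_sol hg hsol hx
    have h0 : HasDerivAt (fun u => -∫ s in u..T, F s) (F x) x := by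
      simpa using (hasDerivAt_int_right hF hx).fun_neg
    have h2 : HasDerivAt (fun s => Real.exp (-ψ s)) (Real.exp (-ψ x) * F x) x :=
      HasDerivAt.exp h0
    have h3 := h1.fun_mul h2
    refine h3.congr_deriv ?_
    simp only [hgdef]; ring
  have hFT : F T = 0 := by
    have := hsol T hTm; simpa using this
  intro t ht
  have hftc : (∫ s in t..T, c * B s ^ 2 * Real.exp (-ψ s)) = u T - u t := by
    apply intervalIntegral.integral_eq_sub_of_hasDeriv_right_of_le ht.2
      (huc.mono (Icc_subset_Icc ht.1 le_rfl))
      (fun x hx => (hud x ⟨lt_of_le_of_lt ht.1 hx.1, hx.2⟩).hasDerivWithinAt)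
    exact intOn ((continuousOn_const.mul (hB.pow 2)).mul
      (Real.continuous_exp.comp_continuousOn hψc.neg)) ht hTm
  have hnn : 0 ≤ ∫ s in t..T, c * B s ^ 2 * Real.exp (-ψ s) := by
    apply intervalIntegral.integral_nonneg ht.2
    intro x hx
    have := Real.exp_pos (-ψ x)
    positivity
  have huT : u T = 0 := by simp [hudef, hFT]
  have hut : u t ≤ 0 := by rw [huT] at hftc; linarith
  have hep := Real.exp_pos (-ψ t)
  by_contra hpos
  push_neg at hpos
  have hut' : F t * Real.exp (-ψ t) ≤ 0 := hut
  nlinarith [mul_pos hpos hep]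

lemma diff_bound {T c R N : ℝ} (hT : 0 < T) (hc : 0 ≤ c) (hR : 0 ≤ R) (hN : 0 ≤ N)
    {B B' F F' : ℝ → ℝ}
    (hB : ContinuousOn B (Icc 0 T)) (hB' : ContinuousOn B' (Icc 0 T))
    (hF : ContinuousOn F (Icc 0 T)) (hF' : ContinuousOn F' (Icc 0 T))
    (hsol : ∀ t ∈ Icc (0:ℝ) T, F t = -∫ s in t..T, (c * B s ^ 2 - F s ^ 2))
    (hsol' : ∀ t ∈ Icc (0:ℝ) T, F' t = -∫ s in t..T, (c * B' s ^ 2 - F' s ^ 2))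
    (hBb : ∀ u ∈ Icc (0:ℝ) T, |B u| ≤ R) (hB'b : ∀ u ∈ Icc (0:ℝ) T, |B' u| ≤ R)
    (hNb : ∀ u ∈ Icc (0:ℝ) T, |B u - B' u| ≤ N)
    (hFneg : ∀ u ∈ Icc (0:ℝ) T, F u ≤ 0) (hF'neg : ∀ u ∈ Icc (0:ℝ) T, F' u ≤ 0) :
    ∀ t ∈ Icc (0:ℝ) T, |F t - F' t| ≤ 2 * c * R * T * N := by
  have hTm : T ∈ Icc (0:ℝ) T := right_mem_Icc.2 hT.le
  have hFF' : ContinuousOn (fun s => F s + F' s) (Icc 0 T) := hF.add hF'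
  set φ : ℝ → ℝ := fun u => ∫ s in u..T, (F s + F' s) with hφdef
  have hφc : ContinuousOn φ (Icc 0 T) := cont_primitive_right hT.le hFF'
  set w : ℝ → ℝ := fun s => (F s - F' s) * Real.exp (-φ s) with hwdef
  have hwc : ContinuousOn w (Icc 0 T) :=
    (hF.sub hF').mul (Real.continuous_exp.comp_continuousOn hφc.neg)
  set w' : ℝ → ℝ := fun s => c * (B s ^ 2 - B' s ^ 2) * Real.exp (-φ s) with hw'def
  have hw'c : ContinuousOn w' (Icc 0 T) :=
    (continuousOn_const.mul ((hB.pow 2).sub (hB'.pow 2))).mul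
      (Real.continuous_exp.comp_continuousOn hφc.neg)
  have hwd : ∀ x ∈ Ioo (0:ℝ) T, HasDerivAt w (w' x) x := by
    intro x hx
    have h1 : HasDerivAt F (c * B x ^ 2 - F x ^ 2) x :=
      hasDerivAt_sol ((continuousOn_const.mul (hB.pow 2)).sub (hF.pow 2)) hsol hx
    have h1' : HasDerivAt F' (c * B' x ^ 2 - F' x ^ 2) x :=
      hasDerivAt_sol ((continuousOn_const.mul (hB'.pow 2)).sub (hF'.pow 2)) hsol' hx
    have h0 : HasDerivAt (fun u => -∫ s in u..T, (F s + F' s)) (F x + F' x) x := by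
      simpa using (hasDerivAt_int_right hFF' hx).fun_neg
    have h2 : HasDerivAt (fun s => Real.exp (-φ s)) (Real.exp (-φ x) * (F x + F' x)) x :=
      HasDerivAt.exp h0
    have h3 := (h1.fun_sub h1').fun_mul h2
    refine h3.congr_deriv ?_
    simp only [hw'def]; ring
  -- FTC on [t, T]
  intro t ht
  have hFT : F T = 0 := by have := hsol T hTm; simpa using this
  have hF'T : F' T = 0 := by have := hsol' T hTm; simpa using this
  have hftc : (∫ s in t..T, w' s) = w T - w t := by
    apply intervalIntegral.integral_eq_sub_of_hasDeriv_right_of_le ht.2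
      (hwc.mono (Icc_subset_Icc ht.1 le_rfl))
      (fun x hx => (hwd x ⟨lt_of_le_of_lt ht.1 hx.1, hx.2⟩).hasDerivWithinAt)
      (intOn hw'c ht hTm)
  have hwT : w T = 0 := by simp [hwdef, hFT, hF'T]
  -- F t - F' t = -(∫ w') * exp (φ t)
  have hkey : F t - F' t = -∫ s in t..T, w' s * Real.exp (φ t) := by
    rw [intervalIntegral.integral_mul_const, hftc, hwT]
    have h4 : Real.exp (-φ t) * Real.exp (φ t) = 1 := by
      rw [← Real.exp_add]; simp
    have h5 : w t = (F t - F' t) * Real.exp (-φ t) := rfl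
    linear_combination (-Real.exp (φ t)) * h5 + (-(F t - F' t)) * h4
  rw [hkey, abs_neg]
  have hbd : ∀ x ∈ Ι t T, ‖w' x * Real.exp (φ t)‖ ≤ 2 * c * R * N := by
    intro x hx
    rw [uIoc_of_le ht.2] at hx
    have hxm : x ∈ Icc (0:ℝ) T := ⟨ht.1.trans hx.1.le, hx.2⟩
    have hexp : Real.exp (-φ x) * Real.exp (φ t) = Real.exp (φ t - φ x) := by
      rw [← Real.exp_add]; ring_nf
    have hpt : φ t - φ x = ∫ r in t..x, (F r + F' r) := by
      rw [hφdef]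
      simp only
      rw [intervalIntegral.integral_symm T t, intervalIntegral.integral_symm T x,
        neg_sub_neg]
      exact intervalIntegral.integral_interval_sub_left (intOn hFF' hTm hxm) (intOn hFF' hTm ht)
    have hneg : φ t - φ x ≤ 0 := by
      rw [hpt]
      apply int_nonpos hx.1.le
      intro r hr
      have hrm : r ∈ Icc (0:ℝ) T := ⟨ht.1.trans hr.1, hr.2.trans hx.2⟩
      have := hFneg r hrm; have := hF'neg r hrm; linarith
    have he1 : Real.exp (φ t - φ x) ≤ 1 := Real.exp_le_one_iff.2 hneg
    have hsq : |B x ^ 2 - B' x ^ 2| ≤ 2 * R * N := by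
      have hid : B x ^ 2 - B' x ^ 2 = (B x + B' x) * (B x - B' x) := by ring
      rw [hid, abs_mul]
      have h5 : |B x + B' x| ≤ 2 * R := by
        have := hBb x hxm; have := hB'b x hxm
        have := abs_add_le (B x) (B' x); linarith
      have h6 := hNb x hxm
      nlinarith [abs_nonneg (B x + B' x), abs_nonneg (B x - B' x)]
    have hre : ‖w' x * Real.exp (φ t)‖ =
        c * |B x ^ 2 - B' x ^ 2| * Real.exp (φ t - φ x) := by
      rw [Real.norm_eq_abs, hw'def]
      simp only
      rw [mul_assoc, mul_assoc, hexp, abs_mul, abs_mul, abs_of_nonneg hc,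
        abs_of_nonneg (Real.exp_pos _).le]
      ring
    rw [hre]
    have h9 : c * |B x ^ 2 - B' x ^ 2| * Real.exp (φ t - φ x) ≤ c * (2 * R * N) * 1 :=
      mul_le_mul (mul_le_mul le_rfl hsq (abs_nonneg _) hc) he1 (Real.exp_pos _).le
        (by positivity)
    linarith
  have h7 := intervalIntegral.norm_integral_le_of_norm_le_const hbd
  rw [Real.norm_eq_abs] at h7
  have h8 : |T - t| ≤ T := by rw [abs_of_nonneg (by linarith [ht.2])]; linarith [ht.1]
  calc |∫ s in t..T, w' s * Real.exp (φ t)| ≤ 2 * c * R * N * |T - t| := h7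
    _ ≤ 2 * c * R * N * T := mul_le_mul le_rfl h8 (abs_nonneg _) (by positivity)
    _ = 2 * c * R * T * N := by ring

/-- Continuity of `t ↦ c * ∫ s in t..T, B s * exp (∫ r in t..s, F r)`. -/
lemma Econt {T c : ℝ} (hT : 0 < T) {B F : ℝ → ℝ} (hB : ContinuousOn B (Icc 0 T))
    (hF : ContinuousOn F (Icc 0 T)) :
    ContinuousOn (fun t => c * ∫ s in t..T, B s * Real.exp (∫ r in t..s, F r)) (Icc 0 T) := by
  have h0m : (0:ℝ) ∈ Icc (0:ℝ) T := left_mem_Icc.2 hT.le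
  set ζ : ℝ → ℝ := fun s => ∫ r in (0:ℝ)..s, F r with hζdef
  have hζ : ContinuousOn ζ (Icc 0 T) := by
    rw [← uIcc_of_le hT.le]
    exact intervalIntegral.continuousOn_primitive_interval'
      (intOn hF h0m (right_mem_Icc.2 hT.le)) left_mem_uIcc
  have hintc : ContinuousOn (fun s => B s * Real.exp (ζ s)) (Icc 0 T) :=
    hB.mul (Real.continuous_exp.comp_continuousOn hζ)
  have hcont2 : ContinuousOn
      (fun t => c * (Real.exp (-ζ t) * ∫ s in t..T, B s * Real.exp (ζ s))) (Icc 0 T) :=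
    continuousOn_const.mul ((Real.continuous_exp.comp_continuousOn hζ.neg).mul
      (cont_primitive_right hT.le hintc))
  apply hcont2.congr
  intro t ht
  have key : (∫ s in t..T, B s * Real.exp (∫ r in t..s, F r))
      = Real.exp (-ζ t) * ∫ s in t..T, B s * Real.exp (ζ s) := by
    rw [← intervalIntegral.integral_const_mul]
    apply intervalIntegral.integral_congr
    intro s hs
    rw [uIcc_of_le ht.2] at hs
    have hsm : s ∈ Icc (0:ℝ) T := ⟨ht.1.trans hs.1, hs.2⟩
    show B s * Real.exp (∫ r in t..s, F r) = Real.exp (-ζ t) * (B s * Real.exp (ζ s))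
    have hsplit : ∫ r in t..s, F r = ζ s - ζ t := by
      have := intervalIntegral.integral_add_adjacent_intervals
        (intOn hF h0m ht) (intOn hF ht hsm)
      simp only [hζdef]
      linarith
    rw [hsplit, Real.exp_sub, Real.exp_neg]
    ring
  simp only [key]

/-- Bound for E-type integrals. -/
lemma E_bound {T M : ℝ} (hM : 0 ≤ M) {B F : ℝ → ℝ}
    (hFneg : ∀ u ∈ Icc (0:ℝ) T, F u ≤ 0)
    (hBb : ∀ u ∈ Icc (0:ℝ) T, |B u| ≤ M) {t : ℝ} (ht : t ∈ Icc (0:ℝ) T) :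
    |∫ s in t..T, B s * Real.exp (∫ r in t..s, F r)| ≤ M * T := by
  have hbd : ∀ x ∈ Ι t T, ‖B x * Real.exp (∫ r in t..x, F r)‖ ≤ M := by
    intro x hx
    rw [uIoc_of_le ht.2] at hx
    have hxm : x ∈ Icc (0:ℝ) T := ⟨ht.1.trans hx.1.le, hx.2⟩
    have hneg : (∫ r in t..x, F r) ≤ 0 := by
      apply int_nonpos hx.1.le
      intro r hr
      exact hFneg r ⟨ht.1.trans hr.1, hr.2.trans hx.2⟩
    have he : Real.exp (∫ r in t..x, F r) ≤ 1 := Real.exp_le_one_iff.2 hneg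
    rw [Real.norm_eq_abs, abs_mul, abs_of_nonneg (Real.exp_pos _).le]
    calc |B x| * Real.exp (∫ r in t..x, F r) ≤ M * 1 :=
        mul_le_mul (hBb x hxm) he (Real.exp_pos _).le hM
      _ = M := mul_one M
  have h7 := intervalIntegral.norm_integral_le_of_norm_le_const hbd
  rw [Real.norm_eq_abs] at h7
  have h8 : |T - t| ≤ T := by
    rw [abs_of_nonneg (by linarith [ht.2])]; linarith [ht.1]
  calc |∫ s in t..T, B s * Real.exp (∫ r in t..s, F r)| ≤ M * |T - t| := h7
    _ ≤ M * T := mul_le_mul le_rfl h8 (abs_nonneg _) hM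

/-- Difference bound for E-type integrals. -/
lemma Ediff_bound {T M δ η : ℝ} (hM : 0 ≤ M) (hδ : 0 ≤ δ) (hη : 0 ≤ η)
    {B B' F F' : ℝ → ℝ}
    (hF : ContinuousOn F (Icc 0 T)) (hF' : ContinuousOn F' (Icc 0 T))
    (hB : ContinuousOn B (Icc 0 T)) (hB' : ContinuousOn B' (Icc 0 T))
    (hFneg : ∀ u ∈ Icc (0:ℝ) T, F u ≤ 0) (hF'neg : ∀ u ∈ Icc (0:ℝ) T, F' u ≤ 0)
    (hB'b : ∀ u ∈ Icc (0:ℝ) T, |B' u| ≤ M)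
    (hdB : ∀ u ∈ Icc (0:ℝ) T, |B u - B' u| ≤ δ)
    (hdF : ∀ u ∈ Icc (0:ℝ) T, |F u - F' u| ≤ η)
    {t : ℝ} (ht : t ∈ Icc (0:ℝ) T) :
    |(∫ s in t..T, B s * Real.exp (∫ r in t..s, F r)) -
      ∫ s in t..T, B' s * Real.exp (∫ r in t..s, F' r)| ≤ (δ + M * (T * η)) * T := by
  have hT0 : (0:ℝ) ≤ T := ht.1.trans ht.2
  have hTm : T ∈ Icc (0:ℝ) T := right_mem_Icc.2 hT0
  have hsub : uIcc t T ⊆ Icc (0:ℝ) T := uIcc_subset_Icc ht hTm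
  have hprimC : ∀ G : ℝ → ℝ, ContinuousOn G (Icc 0 T) →
      ContinuousOn (fun s => ∫ r in t..s, G r) (uIcc t T) := fun G hG =>
    intervalIntegral.continuousOn_primitive_interval'
      ((hG.mono hsub).intervalIntegrable) left_mem_uIcc
  have hc1 : ContinuousOn (fun s => B s * Real.exp (∫ r in t..s, F r)) (uIcc t T) :=
    (hB.mono hsub).mul (Real.continuous_exp.comp_continuousOn (hprimC F hF))
  have hc2 : ContinuousOn (fun s => B' s * Real.exp (∫ r in t..s, F' r)) (uIcc t T) :=
    (hB'.mono hsub).mul (Real.continuous_exp.comp_continuousOn (hprimC F' hF'))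
  rw [← intervalIntegral.integral_sub hc1.intervalIntegrable hc2.intervalIntegrable]
  have hbd : ∀ x ∈ Ι t T, ‖B x * Real.exp (∫ r in t..x, F r) -
      B' x * Real.exp (∫ r in t..x, F' r)‖ ≤ δ + M * (T * η) := by
    intro x hx
    rw [uIoc_of_le ht.2] at hx
    have hxm : x ∈ Icc (0:ℝ) T := ⟨ht.1.trans hx.1.le, hx.2⟩
    have hneg1 : (∫ r in t..x, F r) ≤ 0 :=
      int_nonpos hx.1.le (fun r hr => hFneg r ⟨ht.1.trans hr.1, hr.2.trans hx.2⟩)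
    have hneg2 : (∫ r in t..x, F' r) ≤ 0 :=
      int_nonpos hx.1.le (fun r hr => hF'neg r ⟨ht.1.trans hr.1, hr.2.trans hx.2⟩)
    have he1 : Real.exp (∫ r in t..x, F r) ≤ 1 := Real.exp_le_one_iff.2 hneg1
    have hde : |Real.exp (∫ r in t..x, F r) - Real.exp (∫ r in t..x, F' r)| ≤ T * η := by
      have h1 := exp_lip hneg1 hneg2
      have h2 : (∫ r in t..x, F r) - (∫ r in t..x, F' r) = ∫ r in t..x, (F r - F' r) := by
        rw [intervalIntegral.integral_sub (intOn hF ht hxm) (intOn hF' ht hxm)]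
      rw [h2] at h1
      have h3 : ∀ r ∈ Ι t x, ‖F r - F' r‖ ≤ η := by
        intro r hr
        rw [uIoc_of_le hx.1.le] at hr
        exact hdF r ⟨ht.1.trans hr.1.le, hr.2.trans hx.2⟩
      have h4 := intervalIntegral.norm_integral_le_of_norm_le_const h3
      rw [Real.norm_eq_abs] at h4
      have h5 : |x - t| ≤ T := by
        rw [abs_of_nonneg (by linarith [hx.1.le])]
        linarith [ht.1, hx.2]
      calc |Real.exp (∫ r in t..x, F r) - Real.exp (∫ r in t..x, F' r)|
          ≤ |∫ r in t..x, (F r - F' r)| := h1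
        _ ≤ η * |x - t| := h4
        _ ≤ η * T := mul_le_mul le_rfl h5 (abs_nonneg _) hη
        _ = T * η := mul_comm η T
    have hid : B x * Real.exp (∫ r in t..x, F r) - B' x * Real.exp (∫ r in t..x, F' r)
        = (B x - B' x) * Real.exp (∫ r in t..x, F r) +
          B' x * (Real.exp (∫ r in t..x, F r) - Real.exp (∫ r in t..x, F' r)) := by ring
    rw [Real.norm_eq_abs, hid]
    have hA := abs_add_le ((B x - B' x) * Real.exp (∫ r in t..x, F r))
      (B' x * (Real.exp (∫ r in t..x, F r) - Real.exp (∫ r in t..x, F' r)))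
    rw [abs_mul, abs_mul, abs_of_nonneg (Real.exp_pos _).le] at hA
    have hp1 : |B x - B' x| * Real.exp (∫ r in t..x, F r) ≤ δ * 1 :=
      mul_le_mul (hdB x hxm) he1 (Real.exp_pos _).le hδ
    have hp2 : |B' x| * |Real.exp (∫ r in t..x, F r) - Real.exp (∫ r in t..x, F' r)|
        ≤ M * (T * η) := mul_le_mul (hB'b x hxm) hde (abs_nonneg _) hM
    linarith
  have h7 := intervalIntegral.norm_integral_le_of_norm_le_const hbd
  rw [Real.norm_eq_abs] at h7
  have h8 : |T - t| ≤ T := by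
    rw [abs_of_nonneg (by linarith [ht.2])]; linarith [ht.1]
  calc |∫ s in t..T, (B s * Real.exp (∫ r in t..s, F r) -
        B' s * Real.exp (∫ r in t..s, F' r))| ≤ (δ + M * (T * η)) * |T - t| := h7
    _ ≤ (δ + M * (T * η)) * T := mul_le_mul le_rfl h8 (abs_nonneg _) (by positivity)

end PhiAux

open PhiAux


/-- Contraction estimate for the Picard map
`Φ(B̃)(t) = a − ∫ₜᵀ (εβ B̃(s) − E^{B̃}(s)C^{B̃}(s)) ds`: if `‖B̃‖_∞ ≤ R` and `‖B̃′‖_∞ ≤ R`, then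
`‖Φ(B̃) − Φ(B̃′)‖_∞ ≤ T(|ε|β + 2|ε|β(γ̂R²T²/λ)(1 + γ̂R²T²/λ))‖B̃ − B̃′‖_∞`. -/
theorem Phi_contraction
    (γhat lam β a ε T R : ℝ)
    (hγ : 0 < γhat) (hlam : 0 < lam) (hβ : 0 < β) (ha : 0 < a) (hT : 0 < T) (hR : 0 < R)
    (Btil Btil' : ℝ → ℝ)
    (hB : ContinuousOn Btil (Icc 0 T)) (hB' : ContinuousOn Btil' (Icc 0 T))
    (hBR : supNorm T Btil ≤ R) (hB'R : supNorm T Btil' ≤ R)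
    (F F' : ℝ → ℝ)
    (hFcont : ContinuousOn F (Icc 0 T)) (hF'cont : ContinuousOn F' (Icc 0 T))
    (hFsol : ∀ t ∈ Icc (0:ℝ) T, F t = -∫ s in t..T, (γhat / lam * Btil s ^ 2 - F s ^ 2))
    (hF'sol : ∀ t ∈ Icc (0:ℝ) T, F' t = -∫ s in t..T, (γhat / lam * Btil' s ^ 2 - F' s ^ 2))
    (E E' C C' Phi Phi' : ℝ → ℝ)
    (hE : E = fun t => -(γhat * β / lam) * ∫ s in t..T, Btil s * Real.exp (∫ r in t..s, F r))
    (hE' : E' = fun t => -(γhat * β / lam) *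
      ∫ s in t..T, Btil' s * Real.exp (∫ r in t..s, F' r))
    (hC : C = fun t => -(ε / 2) * ∫ s in t..T, Btil s ^ 2 * Real.exp (∫ r in t..s, F r))
    (hC' : C' = fun t => -(ε / 2) * ∫ s in t..T, Btil' s ^ 2 * Real.exp (∫ r in t..s, F' r))
    (hPhi : Phi = fun t => a - ∫ s in t..T, (ε * β * Btil s - E s * C s))
    (hPhi' : Phi' = fun t => a - ∫ s in t..T, (ε * β * Btil' s - E' s * C' s)) :
    supNorm T (fun t => Phi t - Phi' t) ≤
      T * (|ε| * β + 2 * |ε| * β * (γhat * R ^ 2 * T ^ 2 / lam) *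
        (1 + γhat * R ^ 2 * T ^ 2 / lam)) * supNorm T (fun u => Btil u - Btil' u) := by
  have h0m : (0:ℝ) ∈ Icc (0:ℝ) T := left_mem_Icc.2 hT.le
  have hTm : T ∈ Icc (0:ℝ) T := right_mem_Icc.2 hT.le
  -- supNorm facts
  have supNorm_le : ∀ (f : ℝ → ℝ) (c : ℝ), (∀ u ∈ Icc (0:ℝ) T, |f u| ≤ c) →
      supNorm T f ≤ c := by
    intro f c h
    show sSup ((fun t => |f t|) '' Icc 0 T) ≤ c
    refine csSup_le ⟨|f 0|, ⟨0, h0m, rfl⟩⟩ ?_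
    rintro x ⟨u, hu, rfl⟩
    exact h u hu
  have le_supNorm : ∀ (f : ℝ → ℝ), ContinuousOn f (Icc 0 T) →
      ∀ u ∈ Icc (0:ℝ) T, |f u| ≤ supNorm T f := by
    intro f hf u hu
    show |f u| ≤ sSup ((fun t => |f t|) '' Icc 0 T)
    exact le_csSup (isCompact_Icc.image_of_continuousOn hf.abs).bddAbove
      ⟨u, hu, rfl⟩
  have hBb : ∀ u ∈ Icc (0:ℝ) T, |Btil u| ≤ R :=
    fun u hu => (le_supNorm _ hB u hu).trans hBR
  have hB'b : ∀ u ∈ Icc (0:ℝ) T, |Btil' u| ≤ R :=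
    fun u hu => (le_supNorm _ hB' u hu).trans hB'R
  set N := supNorm T (fun u => Btil u - Btil' u) with hNdef
  have hNb : ∀ u ∈ Icc (0:ℝ) T, |Btil u - Btil' u| ≤ N :=
    le_supNorm _ (hB.sub hB')
  have hN0 : 0 ≤ N := (abs_nonneg _).trans (hNb 0 h0m)
  have hq0 : 0 ≤ γhat / lam := by positivity
  -- nonpositivity of F, F'
  have hFneg : ∀ u ∈ Icc (0:ℝ) T, F u ≤ 0 := F_nonpos hT hq0 hB hFcont hFsol
  have hF'neg : ∀ u ∈ Icc (0:ℝ) T, F' u ≤ 0 := F_nonpos hT hq0 hB' hF'cont hF'sol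
  -- bound on F - F'
  have hdF : ∀ u ∈ Icc (0:ℝ) T, |F u - F' u| ≤ 2 * (γhat / lam) * R * T * N :=
    diff_bound hT hq0 hR.le hN0 hB hB' hFcont hF'cont hFsol hF'sol hBb hB'b hNb hFneg hF'neg
  have hη0 : 0 ≤ 2 * (γhat / lam) * R * T * N := by positivity
  -- squares
  have hB2b : ∀ u ∈ Icc (0:ℝ) T, |Btil' u ^ 2| ≤ R ^ 2 := by
    intro u hu
    rw [abs_pow]
    exact pow_le_pow_left₀ (abs_nonneg _) (hB'b u hu) 2
  have hdB2 : ∀ u ∈ Icc (0:ℝ) T, |Btil u ^ 2 - Btil' u ^ 2| ≤ 2 * R * N := by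
    intro u hu
    have hid : Btil u ^ 2 - Btil' u ^ 2 = (Btil u + Btil' u) * (Btil u - Btil' u) := by ring
    rw [hid, abs_mul]
    have h5 : |Btil u + Btil' u| ≤ 2 * R := by
      have := hBb u hu; have := hB'b u hu; have := abs_add_le (Btil u) (Btil' u); linarith
    have h6 := hNb u hu
    nlinarith [abs_nonneg (Btil u + Btil' u), abs_nonneg (Btil u - Btil' u)]
  -- bounds on E, C', E - E', C - C'
  have hEb : ∀ s ∈ Icc (0:ℝ) T, |E s| ≤ γhat * β / lam * (R * T) := by
    intro s hs
    simp only [hE]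
    rw [abs_mul, abs_neg, abs_of_nonneg (by positivity : (0:ℝ) ≤ γhat * β / lam)]
    exact mul_le_mul le_rfl (E_bound hR.le hFneg hBb hs) (abs_nonneg _) (by positivity)
  have hC'b : ∀ s ∈ Icc (0:ℝ) T, |C' s| ≤ |ε| / 2 * (R ^ 2 * T) := by
    intro s hs
    simp only [hC']
    rw [abs_mul, abs_neg, abs_div]
    have h1 := E_bound (by positivity : (0:ℝ) ≤ R ^ 2) hF'neg hB2b hs
    have h2 : |(2:ℝ)| = 2 := by norm_num
    rw [h2]
    exact mul_le_mul le_rfl h1 (abs_nonneg _) (by positivity)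
  have hdE : ∀ s ∈ Icc (0:ℝ) T, |E s - E' s| ≤
      γhat * β / lam * ((N + R * (T * (2 * (γhat / lam) * R * T * N))) * T) := by
    intro s hs
    simp only [hE, hE']
    rw [← mul_sub, abs_mul, abs_neg, abs_of_nonneg (by positivity : (0:ℝ) ≤ γhat * β / lam)]
    exact mul_le_mul le_rfl
      (Ediff_bound hR.le hN0 hη0 hFcont hF'cont hB hB' hFneg hF'neg hB'b hNb hdF hs)
      (abs_nonneg _) (by positivity)
  have hdC : ∀ s ∈ Icc (0:ℝ) T, |C s - C' s| ≤
      |ε| / 2 * ((2 * R * N + R ^ 2 * (T * (2 * (γhat / lam) * R * T * N))) * T) := by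
    intro s hs
    simp only [hC, hC']
    rw [← mul_sub, abs_mul, abs_neg, abs_div]
    have h2 : |(2:ℝ)| = 2 := by norm_num
    rw [h2]
    exact mul_le_mul le_rfl
      (Ediff_bound (by positivity : (0:ℝ) ≤ R ^ 2) (by positivity) hη0 hFcont hF'cont
        (hB.pow 2) (hB'.pow 2) hFneg hF'neg hB2b hdB2 hdF hs)
      (abs_nonneg _) (by positivity)
  -- continuity of E, C, E', C'
  have hEc : ContinuousOn E (Icc 0 T) := hE ▸ Econt hT hB hFcont
  have hE'c : ContinuousOn E' (Icc 0 T) := hE' ▸ Econt hT hB' hF'cont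
  have hCc : ContinuousOn C (Icc 0 T) := hC ▸ Econt hT (hB.pow 2) hFcont
  have hC'c : ContinuousOn C' (Icc 0 T) := hC' ▸ Econt hT (hB'.pow 2) hF'cont
  have hfc : ContinuousOn (fun s => ε * β * Btil s - E s * C s) (Icc 0 T) :=
    (continuousOn_const.mul hB).sub (hEc.mul hCc)
  have hf'c : ContinuousOn (fun s => ε * β * Btil' s - E' s * C' s) (Icc 0 T) :=
    (continuousOn_const.mul hB').sub (hE'c.mul hC'c)
  -- the constant
  set cN := (|ε| * β + 2 * |ε| * β * (γhat * R ^ 2 * T ^ 2 / lam) *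
      (1 + γhat * R ^ 2 * T ^ 2 / lam)) * N with hcN
  have hcN0 : 0 ≤ cN := by positivity
  -- main pointwise bound
  refine supNorm_le _ _ ?_
  intro t ht
  have key : Phi t - Phi' t = ∫ s in t..T,
      ((ε * β * Btil' s - E' s * C' s) - (ε * β * Btil s - E s * C s)) := by
    simp only [hPhi, hPhi']
    rw [intervalIntegral.integral_sub (intOn hf'c ht hTm) (intOn hfc ht hTm)]
    ring
  rw [key]
  have hbd : ∀ x ∈ Ι t T, ‖(ε * β * Btil' x - E' x * C' x) -
      (ε * β * Btil x - E x * C x)‖ ≤ cN := by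
    intro x hx
    rw [uIoc_of_le ht.2] at hx
    have hxm : x ∈ Icc (0:ℝ) T := ⟨ht.1.trans hx.1.le, hx.2⟩
    have hid : (ε * β * Btil' x - E' x * C' x) - (ε * β * Btil x - E x * C x)
        = ε * β * (Btil' x - Btil x) + (E x * (C x - C' x) + C' x * (E x - E' x)) := by
      ring
    rw [Real.norm_eq_abs, hid]
    have hA1 := abs_add_le (ε * β * (Btil' x - Btil x))
      (E x * (C x - C' x) + C' x * (E x - E' x))
    have hA2 := abs_add_le (E x * (C x - C' x)) (C' x * (E x - E' x))
    have ht1 : |ε * β * (Btil' x - Btil x)| ≤ |ε| * β * N := by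
      rw [abs_mul, abs_mul, abs_of_nonneg hβ.le, abs_sub_comm]
      exact mul_le_mul le_rfl (hNb x hxm) (abs_nonneg _) (by positivity)
    have ht2 : |E x * (C x - C' x)| ≤ (γhat * β / lam * (R * T)) *
        (|ε| / 2 * ((2 * R * N + R ^ 2 * (T * (2 * (γhat / lam) * R * T * N))) * T)) := by
      rw [abs_mul]
      exact mul_le_mul (hEb x hxm) (hdC x hxm) (abs_nonneg _) (by positivity)
    have ht3 : |C' x * (E x - E' x)| ≤ (|ε| / 2 * (R ^ 2 * T)) *
        (γhat * β / lam * ((N + R * (T * (2 * (γhat / lam) * R * T * N))) * T)) := by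
      rw [abs_mul]
      exact mul_le_mul (hC'b x hxm) (hdE x hxm) (abs_nonneg _) (by positivity)
    have hm : 0 ≤ |ε| * β * (γhat * R ^ 2 * T ^ 2 / lam) * N := by positivity
    rw [hcN]
    have hsum : |ε * β * (Btil' x - Btil x) + (E x * (C x - C' x) + C' x * (E x - E' x))|
        ≤ |ε| * β * N + ((γhat * β / lam * (R * T)) *
          (|ε| / 2 * ((2 * R * N + R ^ 2 * (T * (2 * (γhat / lam) * R * T * N))) * T)) +
          (|ε| / 2 * (R ^ 2 * T)) *
          (γhat * β / lam * ((N + R * (T * (2 * (γhat / lam) * R * T * N))) * T))) := by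
      linarith [hA1, hA2, ht1, ht2, ht3]
    have hring : (|ε| * β + 2 * |ε| * β * (γhat * R ^ 2 * T ^ 2 / lam) *
          (1 + γhat * R ^ 2 * T ^ 2 / lam)) * N
        = (|ε| * β * N + ((γhat * β / lam * (R * T)) *
          (|ε| / 2 * ((2 * R * N + R ^ 2 * (T * (2 * (γhat / lam) * R * T * N))) * T)) +
          (|ε| / 2 * (R ^ 2 * T)) *
          (γhat * β / lam * ((N + R * (T * (2 * (γhat / lam) * R * T * N))) * T)))) +
          1 / 2 * (|ε| * β * (γhat * R ^ 2 * T ^ 2 / lam) * N) := by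
      field_simp
      ring
    linarith [hsum, hm, hring.ge]
  have h7 := intervalIntegral.norm_integral_le_of_norm_le_const hbd
  rw [Real.norm_eq_abs] at h7
  have h8 : |T - t| ≤ T := by
    rw [abs_of_nonneg (by linarith [ht.2])]; linarith [ht.1]
  calc |∫ s in t..T, ((ε * β * Btil' s - E' s * C' s) - (ε * β * Btil s - E s * C s))|
      ≤ cN * |T - t| := h7
    _ ≤ cN * T := mul_le_mul le_rfl h8 (abs_nonneg _) hcN0
    _ = T * (|ε| * β + 2 * |ε| * β * (γhat * R ^ 2 * T ^ 2 / lam) *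
        (1 + γhat * R ^ 2 * T ^ 2 / lam)) * N := by rw [hcN]; ring
end
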